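/- arXiv:1902.04492 — 11 statements merged into one kernel-verified Lean document; each statement's English description precedes it below -/
import Mathlib

section
/- Let W be a Krein-selfadjoint operator on H and S a closed subspace of H. Then W is S-complementable if and only if there exists a bounded projection Q ∈ L(H) (Q² = Q) with range(Q) = S such that W ∘ Q = Q^# ∘ W. -/
open ContinuousLinearMap

/-- The Krein adjoint `T^# = J ∘ T* ∘ J`. -/
noncomputable def kadj {H : Type*} [NormedAddCommGroup H] [InnerProductSpace ℂ H]
    [CompleteSpace H] (J T : H →L[ℂ] H) : H →L[ℂ] H := J ∘L adjoint T ∘L J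

/-- `W` is `S`-complementable iff there is a bounded projection `Q` with
range `S` such that `W ∘ Q = Q^# ∘ W`. -/
theorem stmt0 {H : Type*} [NormedAddCommGroup H] [InnerProductSpace ℂ H] [CompleteSpace H]
    (J : H →L[ℂ] H) (hJ : IsSelfAdjoint J) (hJ2 : J ∘L J = 1)
    (W : H →L[ℂ] H) (hW : kadj J W = W)
    (S : Submodule ℂ H) (hS : IsClosed (S : Set H)) :
    (∀ h : H, ∃ s k : H, s ∈ S ∧ (∀ t ∈ S, (inner ℂ (J (W k)) t : ℂ) = 0) ∧ h = s + k) ↔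
      ∃ Q : H →L[ℂ] H, Q ∘L Q = Q ∧ LinearMap.range (Q : H →ₗ[ℂ] H) = S ∧ W ∘L Q = kadj J Q ∘L W := by
  have hJJ : ∀ x : H, J (J x) = x := fun x => by
    have := ContinuousLinearMap.ext_iff.1 hJ2 x
    simpa using this
  have hJsa : ∀ a b : H, (inner ℂ (J a) b : ℂ) = inner ℂ a (J b) := fun a b => by
    conv_lhs => rw [← hJ.adjoint_eq]
    exact adjoint_inner_left J b a
  -- W* = J ∘ W ∘ J
  have hWadj : ∀ a : H, adjoint W a = J (W (J a)) := fun a => by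
    have h1 : J (kadj J W a) = J (W a) := by rw [hW]
    have : ∀ a : H, kadj J W a = J (adjoint W (J a)) := fun a => rfl
    have h2 := congrArg (fun z => J (W (J z))) (hJJ a)
    calc adjoint W a = J (J (adjoint W (J (J a)))) := by rw [hJJ, hJJ]
      _ = J (kadj J W (J a)) := rfl
      _ = J (W (J a)) := by rw [hW]
  -- Krein symmetry of W
  have hsym : ∀ a b : H, (inner ℂ (J (W a)) b : ℂ) =
      (starRingEnd ℂ) (inner ℂ (J (W b)) a) := fun a b => by
    calc (inner ℂ (J (W a)) b : ℂ) = inner ℂ (W a) (J b) := hJsa _ _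
      _ = inner ℂ a (adjoint W (J b)) := (adjoint_inner_right W a (J b)).symm
      _ = inner ℂ a (J (W b)) := by rw [hWadj, hJJ]
      _ = (starRingEnd ℂ) (inner ℂ (J (W b)) a) := by rw [← inner_conj_symm]
  constructor
  · intro hcompl
    -- M = W⁻¹(S^[⊥])
    set M : Submodule ℂ H := Submodule.comap ((J ∘L W) : H →ₗ[ℂ] H) Sᗮ with hMdef
    have hMmem : ∀ x : H, x ∈ M ↔ J (W x) ∈ Sᗮ := fun x => Iff.rfl
    have hMclosed : IsClosed (M : Set H) := by
      have : (M : Set H) = (J ∘L W) ⁻¹' (Sᗮ : Set H) := rfl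
      rw [this]
      exact (Submodule.isClosed_orthogonal S).preimage (J ∘L W).continuous
    set P : Submodule ℂ H := S ⊓ M with hPdef
    have hPclosed : IsClosed (P : Set H) := by
      have : (P : Set H) = (S : Set H) ∩ (M : Set H) := rfl
      rw [this]; exact hS.inter hMclosed
    haveI : CompleteSpace P := hPclosed.completeSpace_coe
    set N : Submodule ℂ H := M ⊓ Pᗮ with hNdef
    have hNclosed : IsClosed (N : Set H) := by
      have : (N : Set H) = (M : Set H) ∩ (Pᗮ : Set H) := rfl
      rw [this]; exact hMclosed.inter (Submodule.isClosed_orthogonal P)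
    have hNM : N ≤ M := inf_le_left
    -- IsCompl S N
    have hdisj : Disjoint S N := by
      rw [Submodule.disjoint_def]
      intro x hxS hxN
      have hxP : x ∈ P := ⟨hxS, hNM hxN⟩
      have hxPo : x ∈ Pᗮ := hxN.2
      have := (Submodule.mem_orthogonal P x).1 hxPo x hxP
      exact inner_self_eq_zero.1 this
    have hcodisj : Codisjoint S N := by
      rw [codisjoint_iff, eq_top_iff]
      intro h _
      obtain ⟨s, k, hsS, hk, hdecomp⟩ := hcompl h
      have hkM : k ∈ M := by
        rw [hMmem, Submodule.mem_orthogonal']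
        exact hk
      set p : H := (P.orthogonalProjectionOnto k : H) with hpdef
      have hpP : p ∈ P := (P.orthogonalProjectionOnto k).2
      have hqN : k - p ∈ N := by
        refine ⟨M.sub_mem hkM hpP.2, ?_⟩
        exact Submodule.sub_starProjection_mem_orthogonal (K := P) k
      have : h = (s + p) + (k - p) := by rw [hdecomp]; abel
      rw [this]
      exact Submodule.add_mem_sup (S.add_mem hsS hpP.1) hqN
    have hIsCompl : IsCompl S N := ⟨hdisj, hcodisj⟩
    -- the projection
    set Q : H →L[ℂ] H :=
      S.subtypeL ∘L S.linearProjOfClosedCompl N hIsCompl hS hNclosed with hQdef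
    have hQmemS : ∀ x : H, Q x ∈ S := fun x =>
      (S.linearProjOfClosedCompl N hIsCompl hS hNclosed x).2
    have hQS : ∀ s : H, s ∈ S → Q s = s := fun s hs => by
      have := Submodule.linearProjOfIsCompl_apply_left hIsCompl ⟨s, hs⟩
      simpa [hQdef, Submodule.coe_continuous_linearProjOfClosedCompl'] using
        congrArg (Submodule.subtype S) this
    have hQN : ∀ n : H, n ∈ N → Q n = 0 := fun n hn => by
      have := Submodule.linearProjOfIsCompl_apply_right' hIsCompl hn
      simpa [hQdef, Submodule.coe_continuous_linearProjOfClosedCompl'] using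
        congrArg (Submodule.subtype S) this
    refine ⟨Q, ?_, ?_, ?_⟩
    · ext x
      exact hQS (Q x) (hQmemS x)
    · apply le_antisymm
      · rintro _ ⟨x, rfl⟩; exact hQmemS x
      · intro s hs; exact ⟨s, hQS s hs⟩
    · -- W ∘ Q = Q^# ∘ W
      ext x
      have key : ∀ y : H, (inner ℂ (J (W (Q x))) y : ℂ) = inner ℂ (J (W x)) (Q y) := by
        intro y
        obtain ⟨s, n, hs, hn, hx⟩ := Submodule.codisjoint_iff_exists_add_eq.mp hcodisj x
        obtain ⟨s', n', hs', hn', hy⟩ := Submodule.codisjoint_iff_exists_add_eq.mp hcodisj y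
        have hQx : Q x = s := by
          rw [← hx, map_add, hQS s hs, hQN n hn, add_zero]
        have hQy : Q y = s' := by
          rw [← hy, map_add, hQS s' hs', hQN n' hn', add_zero]
        have hWn : ∀ m : H, m ∈ M → ∀ t ∈ S, (inner ℂ (J (W m)) t : ℂ) = 0 := by
          intro m hm t ht
          exact (Submodule.mem_orthogonal' S _).1 ((hMmem m).1 hm) t ht
        have h1 : (inner ℂ (J (W s)) n' : ℂ) = 0 := by
          rw [hsym s n', hWn n' (hNM hn') s hs, map_zero]
        have h2 : (inner ℂ (J (W n)) s' : ℂ) = 0 := hWn n (hNM hn) s' hs'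
        rw [hQx, hQy, ← hx, ← hy]
        rw [map_add, map_add, inner_add_left, inner_add_right, h1, h2]
      have hJeq : J (W (Q x)) = adjoint Q (J (W x)) := by
        apply ext_inner_right ℂ
        intro y
        rw [key y, adjoint_inner_left]
      have : (W ∘L Q) x = W (Q x) := rfl
      rw [this]
      show W (Q x) = kadj J Q (W x)
      show W (Q x) = J (adjoint Q (J (W x)))
      rw [← hJeq, hJJ]
  · rintro ⟨Q, hQ2, hrange, hcomm⟩ h
    have hQt : ∀ t : H, t ∈ S → Q t = t := by
      intro t ht
      rw [← hrange] at ht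
      obtain ⟨u, rfl⟩ := ht
      exact congrFun (congrArg DFunLike.coe hQ2) u
    refine ⟨Q h, h - Q h, ?_, ?_, by abel⟩
    · rw [← hrange]; exact ⟨h, rfl⟩
    · intro t ht
      have hWQ : W (Q h) = J (adjoint Q (J (W h))) :=
        congrFun (congrArg DFunLike.coe hcomm) h
      rw [map_sub, hWQ, map_sub, inner_sub_left, hJJ, adjoint_inner_left,
        hQt t ht, sub_self]
end

section
/- Let W be a Krein-selfadjoint operator on H, S a closed subspace of H, and let Q₁, Q₂ ∈ L(H) be projections (Qᵢ² = Qᵢ) with range(Qᵢ) = S and W ∘ Qᵢ = Qᵢ^# ∘ W for i = 1,2. Then W ∘ (I − Q₁) = W ∘ (I − Q₂); that is, the operator W(I − Q) (the Schur complement of W to S) does not depend on the choice of such a projection Q. -/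
open ContinuousLinearMap

lemma kadj_comp {H : Type*} [NormedAddCommGroup H] [InnerProductSpace ℂ H]
    [CompleteSpace H] (J A B : H →L[ℂ] H) (hJ2 : J ∘L J = 1) :
    kadj J (A ∘L B) = kadj J B ∘L kadj J A := by
  simp only [kadj, adjoint_comp]
  calc J ∘L (adjoint B ∘L adjoint A) ∘L J
      = J ∘L adjoint B ∘L (J ∘L J) ∘L adjoint A ∘L J := by rw [hJ2]; ext x; simp
    _ = (J ∘L adjoint B ∘L J) ∘L (J ∘L adjoint A ∘L J) := by ext x; simp

lemma proj_comp {H : Type*} [NormedAddCommGroup H] [InnerProductSpace ℂ H]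
    [CompleteSpace H] {S : Submodule ℂ H} (P Q : H →L[ℂ] H)
    (hP : P ∘L P = P) (hranP : LinearMap.range (P : H →ₗ[ℂ] H) = S) (hranQ : LinearMap.range (Q : H →ₗ[ℂ] H) = S) :
    P ∘L Q = Q := by
  ext x
  have hx : Q x ∈ LinearMap.range (P : H →ₗ[ℂ] H) := by
    rw [hranP, ← hranQ]; exact LinearMap.mem_range_self _ x
  obtain ⟨y, hy⟩ := hx
  have := congrArg (fun T : H →L[ℂ] H => T y) hP
  simp only [comp_apply] at this ⊢
  rw [← hy, ContinuousLinearMap.coe_coe, this]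

/-- the Schur complement `W(I − Q)` does not depend on the choice of the
projection `Q` onto `S` satisfying `W ∘ Q = Q^# ∘ W`. -/
theorem stmt1 {H : Type*} [NormedAddCommGroup H] [InnerProductSpace ℂ H] [CompleteSpace H]
    (J : H →L[ℂ] H) (hJ : IsSelfAdjoint J) (hJ2 : J ∘L J = 1)
    (W : H →L[ℂ] H) (hW : kadj J W = W)
    (S : Submodule ℂ H) (hS : IsClosed (S : Set H))
    (Q₁ Q₂ : H →L[ℂ] H)
    (hQ₁ : Q₁ ∘L Q₁ = Q₁) (hQ₂ : Q₂ ∘L Q₂ = Q₂)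
    (hran₁ : LinearMap.range (Q₁ : H →ₗ[ℂ] H) = S) (hran₂ : LinearMap.range (Q₂ : H →ₗ[ℂ] H) = S)
    (hWQ₁ : W ∘L Q₁ = kadj J Q₁ ∘L W) (hWQ₂ : W ∘L Q₂ = kadj J Q₂ ∘L W) :
    W ∘L (1 - Q₁) = W ∘L (1 - Q₂) := by
  have h21 : Q₂ ∘L Q₁ = Q₁ := proj_comp Q₂ Q₁ hQ₂ hran₂ hran₁
  have h12 : Q₁ ∘L Q₂ = Q₂ := proj_comp Q₁ Q₂ hQ₁ hran₁ hran₂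
  have key : W ∘L Q₁ = W ∘L Q₂ := by
    calc W ∘L Q₁ = W ∘L (Q₂ ∘L Q₁) := by rw [h21]
      _ = (W ∘L Q₂) ∘L Q₁ := by ext x; simp
      _ = (kadj J Q₂ ∘L W) ∘L Q₁ := by rw [hWQ₂]
      _ = kadj J Q₂ ∘L (W ∘L Q₁) := by ext x; simp
      _ = kadj J Q₂ ∘L (kadj J Q₁ ∘L W) := by rw [hWQ₁]
      _ = (kadj J Q₂ ∘L kadj J Q₁) ∘L W := by ext x; simp
      _ = kadj J (Q₁ ∘L Q₂) ∘L W := by rw [kadj_comp J Q₁ Q₂ hJ2]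
      _ = kadj J Q₂ ∘L W := by rw [h12]
      _ = W ∘L Q₂ := hWQ₂.symm
  have : W ∘L (1 - Q₁) = W - W ∘L Q₁ := by ext x; simp
  rw [this, key]; ext x; simp
end

section
/- Let W be a Krein-selfadjoint operator on H, S a closed W-nonnegative subspace of H, and suppose W is S-complementable, witnessed by a projection Q ∈ L(H) with range(Q) = S and W ∘ Q = Q^# ∘ W. Then W(I − Q) is the greatest lower bound, in the Krein order, of the family {E^# ∘ W ∘ E : E ∈ L(H), E² = E, ker(E) = S}: one has W(I − Q) ≤ E^# W E for every projection E with kernel S, and every T ∈ L(H) satisfying T ≤ E^# W E for all such E satisfies T ≤ W(I − Q). -/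
open ContinuousLinearMap

/-- The Krein order: `S ≤ T` iff `J ∘ (T - S)` is a positive operator. -/
def kLE {H : Type*} [NormedAddCommGroup H] [InnerProductSpace ℂ H]
    [CompleteSpace H] (J S T : H →L[ℂ] H) : Prop := (J ∘L (T - S)).IsPositive

/-- if `S` is `W`-nonnegative and `W` is `S`-complementable, witnessed by the
projection `Q`, then `W(I − Q)` is the greatest lower bound in the Krein order of the
family `{E^# W E : E² = E, ker E = S}`. -/
theorem stmt3 {H : Type*} [NormedAddCommGroup H] [InnerProductSpace ℂ H] [CompleteSpace H]
    (J : H →L[ℂ] H) (hJ : IsSelfAdjoint J) (hJ2 : J ∘L J = 1)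
    (W : H →L[ℂ] H) (hW : kadj J W = W)
    (S : Submodule ℂ H) (hS : IsClosed (S : Set H))
    (hSpos : ∀ s ∈ S, 0 ≤ (inner ℂ ((J ∘L W) s) s : ℂ).re)
    (Q : H →L[ℂ] H) (hQ : Q ∘L Q = Q) (hQran : LinearMap.range (Q : H →ₗ[ℂ] H) = S)
    (hWQ : W ∘L Q = kadj J Q ∘L W) :
    (∀ E : H →L[ℂ] H, E ∘L E = E → LinearMap.ker (E : H →ₗ[ℂ] H) = S →
        kLE J (W ∘L (1 - Q)) (kadj J E ∘L (W ∘L E))) ∧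
      (∀ T : H →L[ℂ] H,
        (∀ E : H →L[ℂ] H, E ∘L E = E → LinearMap.ker (E : H →ₗ[ℂ] H) = S →
          kLE J T (kadj J E ∘L (W ∘L E))) →
        kLE J T (W ∘L (1 - Q))) := by
  -- translate composition to multiplication
  have hmul : ∀ f g : H →L[ℂ] H, f ∘L g = f * g := fun f g => rfl
  set F : H →L[ℂ] H := 1 - Q with hFdef
  set P : H →L[ℂ] H := J * W with hPdef
  have hJ' : star J = J := hJ
  have hJ2' : J * J = 1 := hJ2
  have hQ' : Q * Q = Q := hQ
  have hkadj : ∀ T : H →L[ℂ] H, kadj J T = J * star T * J := by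
    intro T
    simp only [kadj, star_eq_adjoint, hmul, mul_assoc]
  -- star W
  have hW' : J * star W * J = W := by rw [← hkadj]; exact hW
  have hstarW : star W * J = J * W := by
    have := congrArg (fun X => J * X) hW'
    simpa [← mul_assoc, hJ2'] using this
  have hP : star P = P := by
    rw [hPdef, star_mul, hJ', hstarW]
  -- W F = F^# W
  have hWQ' : W * Q = J * star Q * J * W := by
    have := hWQ; rw [hkadj] at this; simpa [hmul, mul_assoc] using this
  have hPQ : P * Q = star Q * P := by
    have := congrArg (fun X => J * X) hWQ'
    simp only [← mul_assoc, hJ2', one_mul] at this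
    rw [hPdef, mul_assoc, ← mul_assoc, this, mul_assoc]
  have hPF : P * F = star F * P := by
    simp only [hFdef, mul_sub, sub_mul, star_sub, star_one, mul_one, one_mul, hPQ]
  have hFF : F * F = F := by
    simp only [hFdef, mul_sub, sub_mul, mul_one, one_mul, hQ']
    abel
  -- Q fixes S pointwise
  have hQfix : ∀ s ∈ S, Q s = s := by
    intro s hs
    rw [← hQran] at hs
    obtain ⟨y, rfl⟩ := hs
    have := congrArg (fun f : H →L[ℂ] H => f y) hQ
    simpa using this
  have hFker : ∀ x, F x = 0 ↔ x ∈ S := by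
    intro x
    constructor
    · intro hx
      have h0 : x - Q x = 0 := by simpa [hFdef, sub_apply, one_apply] using hx
      have hxq : x = Q x := by
        rw [sub_eq_zero] at h0; exact h0
      rw [hxq, ← hQran]
      exact ⟨x, rfl⟩
    · intro hx
      simp [hFdef, sub_apply, one_apply, hQfix x hx]
  -- general positivity lemma for `star D * P * D` with `range D ⊆ S`
  have hpos : ∀ D : H →L[ℂ] H, (∀ x, D x ∈ S) → (star D * P * D).IsPositive := by
    intro D hD
    constructor
    · rw [← ContinuousLinearMap.isSelfAdjoint_iff_isSymmetric]; show star (star D * P * D) = star D * P * D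
      simp only [star_mul, star_star, hP, mul_assoc]
    · intro x
      have : (star D * P * D) x = adjoint D (P (D x)) := by
        simp [star_eq_adjoint, ContinuousLinearMap.mul_apply]
      rw [ContinuousLinearMap.reApplyInnerSelf_apply, this, adjoint_inner_left]
      have := hSpos (D x) (hD x)
      simpa [hPdef, hmul] using this
  -- `W F = kadj J F * (W * F)` and the key identity
  have hWF : W * F = J * (P * F) := by
    simp only [hPdef, ← mul_assoc, hJ2', one_mul]
  constructor
  · intro E hE hkerE
    have hE' : E * E = E := hE
    set D : H →L[ℂ] H := E - F with hDdef
    -- E ∘ F = E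
    have hEF : E * F = E := by
      ext x
      have hQx : Q x ∈ S := by rw [← hQran]; exact ⟨x, rfl⟩
      have : E (Q x) = 0 := by rw [← hkerE] at hQx; exact hQx
      simp [hFdef, ContinuousLinearMap.mul_apply, sub_apply, one_apply, map_sub, this]
    -- F ∘ E = F
    have hFE : F * E = F := by
      ext x
      have hxE : x - E x ∈ S := by
        rw [← hkerE]
        have : E (x - E x) = 0 := by
          have := congrArg (fun f : H →L[ℂ] H => f x) hE
          simp only [ContinuousLinearMap.comp_apply] at this
          simp [map_sub, this]
        exact this
      have h0 : F (x - E x) = 0 := (hFker _).2 hxE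
      have : F x - F (E x) = 0 := by rw [← map_sub]; exact h0
      have := sub_eq_zero.mp this
      simp [ContinuousLinearMap.mul_apply, ← this]
    have hDS : ∀ x, D x ∈ S := by
      intro x
      have hFD : F * D = 0 := by
        rw [hDdef, mul_sub, hFE, hFF, sub_self]
      have : F (D x) = 0 := by
        have := congrArg (fun f : H →L[ℂ] H => f x) hFD
        simpa [ContinuousLinearMap.mul_apply] using this
      exact (hFker _).1 this
    -- key operator identity
    have e1 : star E * (P * F) = P * F := by
      rw [hPF, ← mul_assoc, ← star_mul, hFE, ← hPF]
    have e2 : star F * (P * E) = P * F := by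
      rw [← mul_assoc, ← hPF, mul_assoc, hFE]
    have e3 : star F * (P * F) = P * F := by
      rw [← mul_assoc, ← hPF, mul_assoc, hFF]
    have l1 : J * (kadj J E * (W * E)) = star E * (P * E) := by
      rw [hkadj]
      simp only [hPdef, ← mul_assoc, hJ2', one_mul]
    have l2 : J * (W * F) = P * F := by
      simp only [hPdef, ← mul_assoc]
    have expand : star D * (P * D) =
        star E * (P * E) - star E * (P * F) - star F * (P * E) + star F * (P * F) := by
      simp only [hDdef, star_sub, sub_mul, mul_sub]
      abel
    have key : J * (kadj J E * (W * E) - W * F) = star D * P * D := by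
      rw [mul_sub, l1, l2, mul_assoc (star D) P D, expand, e1, e2, e3]
      abel
    have hcomp : J ∘L (kadj J E ∘L (W ∘L E) - W ∘L F) = star D * P * D := by
      rw [hmul, hmul, hmul]
      exact key
    unfold kLE
    rw [hcomp]
    exact hpos D hDS
  · intro T hT
    have hF2 : F ∘L F = F := hFF
    have hkerF : LinearMap.ker (F : H →ₗ[ℂ] H) = S := by
      ext x
      exact hFker x
    have := hT F hF2 hkerF
    have heq : kadj J F ∘L (W ∘L F) = W ∘L F := by
      rw [hmul, hmul, hkadj, hWF]
      calc J * star F * J * (J * (P * F))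
          = J * star F * (P * F) := by
            rw [mul_assoc (J * star F) J, ← mul_assoc J J, hJ2', one_mul]
        _ = J * (star F * (star F * P)) := by rw [hPF, mul_assoc]
        _ = J * (star (F * F) * P) := by rw [star_mul, mul_assoc]
        _ = J * (P * F) := by rw [hFF, ← hPF]
    rw [heq] at this
    exact this
end

section
/- Let W be a Krein-selfadjoint operator on H and B ∈ L(H) with closed range. Then the following are equivalent: (i) there exists X₀ ∈ L(H) such that (BX₀ − I)^# W (BX₀ − I) ≤ (BX − I)^# W (BX − I) in the Krein order for every X ∈ L(H); (ii) range(B) is W-nonnegative and H = range(B) + W⁻¹(range(B)^[⊥]); (iii) range(B) is W-nonnegative and the normal equation B^# W (BX − I) = 0 admits a solution X ∈ L(H). -/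
open ContinuousLinearMap ComplexConjugate

private lemma quad_aux' {a b : ℝ} (h : ∀ t : ℝ, 0 ≤ t * a + t ^ 2 * b) : a = 0 ∧ 0 ≤ b := by
  have hb : 0 ≤ b := by have h1 := h 1; have h2 := h (-1); nlinarith
  refine ⟨?_, hb⟩
  by_contra ha
  have habs : 0 < |a| := abs_pos.mpr ha
  have key : ∀ t : ℝ, 0 < t → |a| ≤ t * b := by
    intro t ht
    have h1 := h t
    have h2 := h (-t)
    rcases abs_cases a with ⟨he, _⟩ | ⟨he, _⟩ <;> rw [he] <;> nlinarith
  have := key (|a| / (2 * b + 1)) (by positivity)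
  rw [div_mul_eq_mul_div, le_div_iff₀ (by linarith)] at this
  nlinarith

private lemma exists_sol' {H : Type*} [NormedAddCommGroup H] [InnerProductSpace ℂ H]
    [CompleteSpace H] (A B : H →L[ℂ] H) (hB : IsClosed (Set.range ⇑B))
    (hdec : ∀ h : H, ∃ u v : H, h = B u + v ∧ adjoint B (A v) = 0) :
    ∃ X : H →L[ℂ] H, ∀ h : H, adjoint B (A (B (X h) - h)) = 0 := by
  classical
  set M : Submodule ℂ H := LinearMap.range (B : H →ₗ[ℂ] H) with hM
  have hMclosed : IsClosed (M : Set H) := by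
    simpa [hM, LinearMap.coe_range] using hB
  haveI : CompleteSpace M := hMclosed.completeSpace_coe
  set N : Submodule ℂ H := LinearMap.ker ((adjoint B ∘L A : H →L[ℂ] H) : H →ₗ[ℂ] H) with hN
  haveI : CompleteSpace N := (ContinuousLinearMap.isClosed_ker (adjoint B ∘L A)).completeSpace_coe
  set ρ : WithLp 2 (↥M × ↥N) ≃L[ℂ] ↥M × ↥N := WithLp.prodContinuousLinearEquiv 2 ℂ ↥M ↥N with hρ
  set Φ : WithLp 2 (↥M × ↥N) →L[ℂ] H :=
    ((M.subtypeL).coprod (N.subtypeL)) ∘L (ρ : WithLp 2 (↥M × ↥N) →L[ℂ] ↥M × ↥N) with hΦ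
  set E : Submodule ℂ (WithLp 2 (↥M × ↥N)) := (LinearMap.ker (Φ : WithLp 2 (↥M × ↥N) →ₗ[ℂ] H))ᗮ with hE
  haveI : CompleteSpace E := (Submodule.isClosed_orthogonal _).completeSpace_coe
  haveI : CompleteSpace (LinearMap.ker (Φ : WithLp 2 (↥M × ↥N) →ₗ[ℂ] H)) := (ContinuousLinearMap.isClosed_ker Φ).completeSpace_coe
  set Φ' : E →L[ℂ] H := Φ ∘L E.subtypeL with hΦ'
  have hinj : LinearMap.ker (Φ' : E →ₗ[ℂ] H) = ⊥ := by
    rw [Submodule.eq_bot_iff]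
    rintro ⟨x, hxE⟩ hx
    have hxker : x ∈ LinearMap.ker (Φ : WithLp 2 (↥M × ↥N) →ₗ[ℂ] H) := by
      have : Φ x = 0 := by simpa [hΦ', LinearMap.mem_ker] using hx
      simpa [LinearMap.mem_ker] using this
    exact Subtype.ext (inner_self_eq_zero.mp ((Submodule.mem_orthogonal _ x).mp hxE x hxker))
  have hsurj : LinearMap.range (Φ' : E →ₗ[ℂ] H) = ⊤ := by
    rw [Submodule.eq_top_iff']
    intro h
    obtain ⟨u, v, huv, hv⟩ := hdec h
    have hmem : h ∈ LinearMap.range (Φ : WithLp 2 (↥M × ↥N) →ₗ[ℂ] H) := by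
      refine ⟨ρ.symm (⟨B u, ⟨u, rfl⟩⟩, ⟨v, ?_⟩), ?_⟩
      · simpa [hN, LinearMap.mem_ker] using hv
      · simp [hΦ, huv.symm]
    obtain ⟨p, hp⟩ := hmem
    have hdecomp : p ∈ (LinearMap.ker (Φ : WithLp 2 (↥M × ↥N) →ₗ[ℂ] H)) ⊔ E := by
      rw [hE, Submodule.sup_orthogonal_of_hasOrthogonalProjection]; trivial
    obtain ⟨k, hk, e, he, hke⟩ := Submodule.mem_sup.mp hdecomp
    refine ⟨⟨e, he⟩, ?_⟩
    have hk0 : Φ k = 0 := hk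
    simp only [hΦ', comp_apply, Submodule.subtypeL_apply, Submodule.coe_subtype]
    rw [← hp, ← hke, map_add]; simp [hk0]
  let eΦ : E ≃L[ℂ] H := ContinuousLinearEquiv.ofBijective Φ' hinj hsurj
  set K : Submodule ℂ H := (LinearMap.ker (B : H →ₗ[ℂ] H))ᗮ with hK
  haveI : CompleteSpace K := (Submodule.isClosed_orthogonal _).completeSpace_coe
  haveI : CompleteSpace (LinearMap.ker (B : H →ₗ[ℂ] H)) := (ContinuousLinearMap.isClosed_ker B).completeSpace_coe
  set B₁ : K →L[ℂ] M := ContinuousLinearMap.codRestrict (B ∘L K.subtypeL) M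
    (fun x => ⟨x, rfl⟩) with hB₁
  have hB₁inj : LinearMap.ker (B₁ : K →ₗ[ℂ] M) = ⊥ := by
    rw [Submodule.eq_bot_iff]
    rintro ⟨x, hxK⟩ hx
    have hxker : x ∈ LinearMap.ker (B : H →ₗ[ℂ] H) := by
      have : B x = 0 := congrArg Subtype.val (show B₁ ⟨x, hxK⟩ = 0 from hx)
      simpa [LinearMap.mem_ker] using this
    exact Subtype.ext (inner_self_eq_zero.mp ((Submodule.mem_orthogonal _ x).mp hxK x hxker))
  have hB₁surj : LinearMap.range (B₁ : K →ₗ[ℂ] M) = ⊤ := by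
    rw [Submodule.eq_top_iff']
    rintro ⟨m, u, hu⟩
    have hdecomp : u ∈ (LinearMap.ker (B : H →ₗ[ℂ] H)) ⊔ K := by
      rw [hK, Submodule.sup_orthogonal_of_hasOrthogonalProjection]; trivial
    obtain ⟨k, hk, q, hq, hkq⟩ := Submodule.mem_sup.mp hdecomp
    refine ⟨⟨q, hq⟩, ?_⟩
    apply Subtype.ext
    have hk0 : B k = 0 := hk
    show B q = m
    rw [← hu, ← hkq, map_add]; simp [hk0]
  let eB : K ≃L[ℂ] M := ContinuousLinearEquiv.ofBijective B₁ hB₁inj hB₁surj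
  set X : H →L[ℂ] H := K.subtypeL ∘L ((eB.symm : M →L[ℂ] K) ∘L
    ((ContinuousLinearMap.fst ℂ ↥M ↥N) ∘L
      ((ρ : WithLp 2 (↥M × ↥N) →L[ℂ] ↥M × ↥N) ∘L
        (E.subtypeL ∘L (eΦ.symm : H →L[ℂ] E))))) with hX
  refine ⟨X, fun h => ?_⟩
  set p : ↥M × ↥N := ρ (E.subtypeL (eΦ.symm h)) with hp
  have hΦp : (p.1 : H) + (p.2 : H) = h := by
    have : Φ' (eΦ.symm h) = h := eΦ.apply_symm_apply h
    simpa [hΦ', hΦ, hp] using this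
  have hBX : B (X h) = (p.1 : H) := by
    have h1 : B₁ (eB.symm p.1) = p.1 := eB.apply_symm_apply p.1
    have := congrArg Subtype.val h1
    exact this
  rw [hBX]
  have hn : adjoint B (A (p.2 : H)) = 0 := p.2.2
  have heq : (p.1 : H) - h = -(p.2 : H) := by rw [← hΦp]; abel
  rw [heq, map_neg, map_neg, hn, neg_zero]

private lemma quad_exp' {H : Type*} [NormedAddCommGroup H] [InnerProductSpace ℂ H]
    [CompleteSpace H] (A : H →L[ℂ] H) (hAsa' : adjoint A = A) (x u : H) (t : ℝ) :
    (inner ℂ (A (x + (t:ℂ)•u)) (x + (t:ℂ)•u) : ℂ).re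
      = (inner ℂ (A x) x : ℂ).re + t * (2 * (inner ℂ (A x) u : ℂ).re)
        + t^2 * (inner ℂ (A u) u : ℂ).re := by
  have hsym : (inner ℂ (A u) x : ℂ) = conj (inner ℂ (A x) u : ℂ) := by
    conv_lhs => rw [← hAsa']
    rw [adjoint_inner_left, ← inner_conj_symm]
  have hexp : (inner ℂ (A (x + (t:ℂ)•u)) (x + (t:ℂ)•u) : ℂ)
      = inner ℂ (A x) x + (t:ℂ) * inner ℂ (A x) u + (t:ℂ) * inner ℂ (A u) x
        + (t:ℂ)^2 * inner ℂ (A u) u := by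
    simp only [map_add, map_smul, inner_add_left, inner_add_right, inner_smul_left,
      inner_smul_right, Complex.conj_ofReal]
    ring
  rw [hexp, hsym]
  simp [Complex.add_re, Complex.mul_re, Complex.ofReal_re, Complex.ofReal_im,
    Complex.conj_re, ← Complex.ofReal_pow, Complex.conj_im]
  have h2 : (inner ℂ u (A x) : ℂ).re = (inner ℂ (A x) u : ℂ).re := by
    rw [← inner_conj_symm, Complex.conj_re]
  rw [h2]; ring

set_option maxHeartbeats 1000000 in
/-- existence of a minimum of `(BX − I)^# W (BX − I)` over `X` is
equivalent to `range B` being `W`-nonnegative plus `S`-complementability of `W`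
(`H = range B + W⁻¹(range B^[⊥])`), and also to the solvability of the normal
equation `B^# W (BX − I) = 0`. -/
theorem stmt5 {H : Type*} [NormedAddCommGroup H] [InnerProductSpace ℂ H] [CompleteSpace H]
    (J : H →L[ℂ] H) (hJ : IsSelfAdjoint J) (hJ2 : J ∘L J = 1)
    (W : H →L[ℂ] H) (hW : kadj J W = W)
    (B : H →L[ℂ] H) (hB : IsClosed (Set.range ⇑B)) :
    ((∃ X₀ : H →L[ℂ] H, ∀ X : H →L[ℂ] H,
        kLE J (kadj J (B ∘L X₀ - 1) ∘L (W ∘L (B ∘L X₀ - 1)))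
          (kadj J (B ∘L X - 1) ∘L (W ∘L (B ∘L X - 1)))) ↔
      ((∀ x : H, 0 ≤ (inner ℂ ((J ∘L W) (B x)) (B x) : ℂ).re) ∧
        ∀ h : H, ∃ u v : H, h = B u + v ∧
          ∀ y : H, (inner ℂ (J (W v)) (B y) : ℂ) = 0)) ∧
    (((∀ x : H, 0 ≤ (inner ℂ ((J ∘L W) (B x)) (B x) : ℂ).re) ∧
        ∀ h : H, ∃ u v : H, h = B u + v ∧
          ∀ y : H, (inner ℂ (J (W v)) (B y) : ℂ) = 0) ↔
      ((∀ x : H, 0 ≤ (inner ℂ ((J ∘L W) (B x)) (B x) : ℂ).re) ∧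
        ∃ X : H →L[ℂ] H, kadj J B ∘L (W ∘L (B ∘L X - 1)) = 0)) := by
  set A : H →L[ℂ] H := J ∘L W with hAdef
  have hJpt : ∀ x : H, J (J x) = x := fun x => by
    have := congrArg (fun T : H →L[ℂ] H => T x) hJ2; simpa using this
  have hJadj : adjoint J = J := hJ.adjoint_eq
  have hAsa' : adjoint A = A := by
    have h2 : J ∘L (adjoint W ∘L J) = W := hW
    ext x
    have hx : J (adjoint W (J x)) = W x := by
      have := congrArg (fun T : H →L[ℂ] H => T x) h2
      simpa [comp_apply] using this
    simp [hAdef, adjoint_comp, hJadj, comp_apply, ← hx, hJpt]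
  -- reduction of the Krein quantities to Hilbert ones
  have hred : ∀ D : H →L[ℂ] H, J ∘L (kadj J D ∘L (W ∘L D)) = adjoint D ∘L (A ∘L D) := by
    intro D; ext x; simp [kadj, hAdef, comp_apply, hJpt]
  have hQ : ∀ D₀ D₁ : H →L[ℂ] H,
      kLE J (kadj J D₀ ∘L (W ∘L D₀)) (kadj J D₁ ∘L (W ∘L D₁))
        ↔ (adjoint D₁ ∘L (A ∘L D₁) - adjoint D₀ ∘L (A ∘L D₀)).IsPositive := by
    intro D₀ D₁
    unfold kLE
    rw [comp_sub, hred, hred]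
  have hconv : ∀ D : H →L[ℂ] H,
      kadj J B ∘L (W ∘L D) = 0 ↔ adjoint B ∘L (A ∘L D) = 0 := by
    intro D
    have hcomp : kadj J B ∘L (W ∘L D) = J ∘L (adjoint B ∘L (A ∘L D)) := by
      ext x; simp [kadj, hAdef, comp_apply]
    rw [hcomp]
    constructor
    · intro h0
      ext x
      have := congrArg (fun T : H →L[ℂ] H => J (T x)) h0
      simpa [comp_apply, hJpt] using this
    · intro h0; rw [h0, comp_zero]
  have hsand : ∀ T : H →L[ℂ] H, (∀ x : H, 0 ≤ (inner ℂ (A (T x)) (T x) : ℂ).re) →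
      (adjoint T ∘L (A ∘L T)).IsPositive := by
    intro T hT
    constructor
    · rw [← isSelfAdjoint_iff_isSymmetric, isSelfAdjoint_iff']
      ext x
      simp [adjoint_comp, adjoint_adjoint, hAsa', comp_apply, comp_assoc]
    · intro x
      have : (adjoint T ∘L (A ∘L T)).reApplyInnerSelf x = (inner ℂ (A (T x)) (T x) : ℂ).re := by
        simp [reApplyInnerSelf, comp_apply, adjoint_inner_left]
      rw [this]; exact hT x
  have hre : ∀ (S T : H →L[ℂ] H) (h : H),
      (adjoint S ∘L (A ∘L S) - adjoint T ∘L (A ∘L T)).reApplyInnerSelf h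
        = (inner ℂ (A (S h)) (S h) : ℂ).re - (inner ℂ (A (T h)) (T h) : ℂ).re := by
    intro S T h
    simp only [ContinuousLinearMap.reApplyInnerSelf_apply, ContinuousLinearMap.sub_apply,
      comp_apply, inner_sub_left, adjoint_inner_left, Complex.sub_re, RCLike.re_to_complex]
  -- the three statements
  have h13 : (∃ X₀ : H →L[ℂ] H, ∀ X : H →L[ℂ] H,
      kLE J (kadj J (B ∘L X₀ - 1) ∘L (W ∘L (B ∘L X₀ - 1)))
        (kadj J (B ∘L X - 1) ∘L (W ∘L (B ∘L X - 1)))) →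
      ((∀ x : H, 0 ≤ (inner ℂ (A (B x)) (B x) : ℂ).re) ∧
        ∃ X : H →L[ℂ] H, kadj J B ∘L (W ∘L (B ∘L X - 1)) = 0) := by
    rintro ⟨X₀, hX₀⟩
    set D₀ : H →L[ℂ] H := B ∘L X₀ - 1 with hD₀
    have hpos : ∀ (C : H →L[ℂ] H) (h : H),
        (inner ℂ (A (D₀ h)) (B (C h)) : ℂ).re = 0 ∧
          0 ≤ (inner ℂ (A (B (C h))) (B (C h)) : ℂ).re := by
      intro C h
      have key : ∀ t : ℝ, 0 ≤ t * (2 * (inner ℂ (A (D₀ h)) (B (C h)) : ℂ).re)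
          + t^2 * (inner ℂ (A (B (C h))) (B (C h)) : ℂ).re := by
        intro t
        have hp := (hQ _ _).mp (hX₀ (X₀ + (t:ℂ) • C))
        have h2 := hp.2 h
        have hDt : (B ∘L (X₀ + (t:ℂ) • C) - 1) h = D₀ h + (t:ℂ) • (B (C h)) := by
          simp [hD₀, comp_apply, sub_apply, map_add, map_smul]
          abel
        rw [hre (B ∘L (X₀ + (t:ℂ) • C) - 1) D₀ h, hDt, quad_exp' A hAsa'] at h2
        linarith
      obtain ⟨ha, hb⟩ := quad_aux' key
      exact ⟨by linarith, hb⟩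
    constructor
    · intro x
      rcases eq_or_ne x 0 with rfl | hx
      · simp
      · have hbq := (hpos ((innerSL ℂ x).smulRight x) x).2
        have hCx : ((innerSL ℂ x).smulRight x) x = ((‖x‖:ℂ)^2) • x := by
          simp [ContinuousLinearMap.smulRight_apply, innerSL_apply_apply, inner_self_eq_norm_sq_to_K]
        rw [hCx] at hbq
        have hsm : (inner ℂ (A (B (((‖x‖:ℂ)^2) • x))) (B (((‖x‖:ℂ)^2) • x)) : ℂ)
            = ((‖x‖:ℂ)^2 * (‖x‖:ℂ)^2) * inner ℂ (A (B x)) (B x) := by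
          simp only [map_smul, inner_smul_left, inner_smul_right, map_pow,
            Complex.conj_ofReal]
          ring
        rw [hsm] at hbq
        have hn4 : (0:ℝ) < ‖x‖^4 := pow_pos (norm_pos_iff.mpr hx) 4
        have : ((‖x‖:ℂ)^2 * (‖x‖:ℂ)^2 * inner ℂ (A (B x)) (B x) : ℂ).re
            = ‖x‖^4 * (inner ℂ (A (B x)) (B x) : ℂ).re := by
          rw [show ((‖x‖:ℂ)^2 * (‖x‖:ℂ)^2) = ((‖x‖^4 : ℝ) : ℂ) by push_cast; ring]
          rw [Complex.re_ofReal_mul]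
        rw [this] at hbq
        nlinarith
    · -- normal equation solvable with X₀
      refine ⟨X₀, (hconv _).mpr ?_⟩
      have horth : ∀ h y : H, (inner ℂ (A (D₀ h)) (B y) : ℂ) = 0 := by
        intro h y
        rcases eq_or_ne h 0 with rfl | hh
        · simp
        · have h1 := (hpos ((innerSL ℂ h).smulRight y) h).1
          have h2 := (hpos ((innerSL ℂ h).smulRight (Complex.I • y)) h).1
          have hCy : ((innerSL ℂ h).smulRight y) h = ((‖h‖:ℂ)^2) • y := by
            simp [ContinuousLinearMap.smulRight_apply, innerSL_apply_apply, inner_self_eq_norm_sq_to_K]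
          have hCy' : ((innerSL ℂ h).smulRight (Complex.I • y)) h
              = ((‖h‖:ℂ)^2) • (Complex.I • y) := by
            simp [ContinuousLinearMap.smulRight_apply, innerSL_apply_apply, inner_self_eq_norm_sq_to_K]
          rw [hCy] at h1
          rw [hCy'] at h2
          have hn2 : (0:ℝ) < ‖h‖^2 := pow_pos (norm_pos_iff.mpr hh) 2
          have e1 : (inner ℂ (A (D₀ h)) (B (((‖h‖:ℂ)^2) • y)) : ℂ)
              = ((‖h‖^2 : ℝ) : ℂ) * inner ℂ (A (D₀ h)) (B y) := by
            rw [map_smul, inner_smul_right]; push_cast; ring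
          have e2 : (inner ℂ (A (D₀ h)) (B (((‖h‖:ℂ)^2) • (Complex.I • y))) : ℂ)
              = ((‖h‖^2 : ℝ) : ℂ) * (Complex.I * inner ℂ (A (D₀ h)) (B y)) := by
            rw [map_smul, map_smul, inner_smul_right, inner_smul_right]; push_cast; ring
          rw [e1, Complex.re_ofReal_mul] at h1
          rw [e2, Complex.re_ofReal_mul] at h2
          have hre : (inner ℂ (A (D₀ h)) (B y) : ℂ).re = 0 := by
            rcases mul_eq_zero.mp h1 with h' | h'
            · exact absurd h' (ne_of_gt hn2)
            · exact h'
          have him : (inner ℂ (A (D₀ h)) (B y) : ℂ).im = 0 := by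
            have : (Complex.I * inner ℂ (A (D₀ h)) (B y)).re = 0 := by
              rcases mul_eq_zero.mp h2 with h' | h'
              · exact absurd h' (ne_of_gt hn2)
              · exact h'
            simpa [Complex.mul_re] using this
          exact Complex.ext (by simpa using hre) (by simpa using him)
      ext h
      apply ext_inner_right ℂ
      intro y
      simp only [comp_apply, zero_apply, inner_zero_left]
      rw [adjoint_inner_left]
      exact horth h y
  have h31 : ((∀ x : H, 0 ≤ (inner ℂ (A (B x)) (B x) : ℂ).re) ∧
      ∃ X : H →L[ℂ] H, kadj J B ∘L (W ∘L (B ∘L X - 1)) = 0) →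
      (∃ X₀ : H →L[ℂ] H, ∀ X : H →L[ℂ] H,
        kLE J (kadj J (B ∘L X₀ - 1) ∘L (W ∘L (B ∘L X₀ - 1)))
          (kadj J (B ∘L X - 1) ∘L (W ∘L (B ∘L X - 1)))) := by
    rintro ⟨hnn, X, hX⟩
    have hE : adjoint B ∘L (A ∘L (B ∘L X - 1)) = 0 := (hconv _).mp hX
    have horth : ∀ h z : H, (inner ℂ (A ((B ∘L X - 1) h)) (B z) : ℂ) = 0 := by
      intro h z
      have := congrArg (fun T : H →L[ℂ] H => T h) hE
      simp only [comp_apply, zero_apply] at this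
      rw [← adjoint_inner_left, this, inner_zero_left]
    set D₀ : H →L[ℂ] H := B ∘L X - 1 with hD₀
    refine ⟨X, fun Y => ?_⟩
    rw [hQ]
    set D₁ : H →L[ℂ] H := B ∘L Y - 1 with hD₁
    set T : H →L[ℂ] H := B ∘L (Y - X) with hT
    have hTapp : ∀ z : H, T z = B ((Y - X) z) := fun z => by rw [hT]; rfl
    have hc0 : ∀ h z : H, (inner ℂ (A (D₀ h)) (T z) : ℂ) = 0 := by
      intro h z; rw [hTapp z]; exact horth h _
    have hid : adjoint D₁ ∘L (A ∘L D₁) - adjoint D₀ ∘L (A ∘L D₀)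
        = adjoint T ∘L (A ∘L T) := by
      ext h
      apply ext_inner_right ℂ
      intro g
      have hDg : ∀ w : H, D₁ w = D₀ w + T w := by
        intro w
        rw [hD₁, hD₀, hT]
        simp only [comp_apply, sub_apply, map_sub, one_apply]
        abel
      have hc2 : (inner ℂ (A (T h)) (D₀ g) : ℂ) = 0 := by
        have heq2 : (inner ℂ (A (T h)) (D₀ g) : ℂ) = conj (inner ℂ (A (D₀ g)) (T h) : ℂ) := by
          conv_lhs => rw [← hAsa']
          rw [adjoint_inner_left, ← inner_conj_symm]
        rw [heq2, hc0 g h, map_zero]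
      simp only [ContinuousLinearMap.sub_apply, comp_apply, inner_sub_left,
        adjoint_inner_left]
      rw [hDg h, hDg g]
      simp only [map_add, inner_add_left, inner_add_right]
      rw [hc0 h g, hc2]
      ring
    rw [hid]
    apply hsand
    intro x
    rw [hTapp x]
    exact hnn _
  have h23 : ((∀ x : H, 0 ≤ (inner ℂ (A (B x)) (B x) : ℂ).re) ∧
      ∀ h : H, ∃ u v : H, h = B u + v ∧ ∀ y : H, (inner ℂ (J (W v)) (B y) : ℂ) = 0) →
      ((∀ x : H, 0 ≤ (inner ℂ (A (B x)) (B x) : ℂ).re) ∧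
        ∃ X : H →L[ℂ] H, kadj J B ∘L (W ∘L (B ∘L X - 1)) = 0) := by
    rintro ⟨hnn, hdec⟩
    refine ⟨hnn, ?_⟩
    have hdec' : ∀ h : H, ∃ u v : H, h = B u + v ∧ adjoint B (A v) = 0 := by
      intro h
      obtain ⟨u, v, huv, hv⟩ := hdec h
      refine ⟨u, v, huv, ?_⟩
      apply ext_inner_right ℂ
      intro y
      rw [adjoint_inner_left, inner_zero_left]
      have : A v = J (W v) := by simp [hAdef, comp_apply]
      rw [this]
      exact hv y
    obtain ⟨X, hX⟩ := exists_sol' A B hB hdec'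
    refine ⟨X, (hconv _).mpr ?_⟩
    ext h
    simp only [comp_apply, zero_apply]
    have : (B ∘L X - 1) h = B (X h) - h := by simp [comp_apply, sub_apply]
    rw [this]
    exact hX h
  have h32 : ((∀ x : H, 0 ≤ (inner ℂ (A (B x)) (B x) : ℂ).re) ∧
      ∃ X : H →L[ℂ] H, kadj J B ∘L (W ∘L (B ∘L X - 1)) = 0) →
      ((∀ x : H, 0 ≤ (inner ℂ (A (B x)) (B x) : ℂ).re) ∧
        ∀ h : H, ∃ u v : H, h = B u + v ∧ ∀ y : H, (inner ℂ (J (W v)) (B y) : ℂ) = 0) := by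
    rintro ⟨hnn, X, hX⟩
    refine ⟨hnn, fun h => ?_⟩
    have hE : adjoint B ∘L (A ∘L (B ∘L X - 1)) = 0 := (hconv _).mp hX
    refine ⟨X h, h - B (X h), by abel, fun y => ?_⟩
    have hv : h - B (X h) = -((B ∘L X - 1) h) := by
      simp [comp_apply, sub_apply]
    have hz : adjoint B (A ((B ∘L X - 1) h)) = 0 := by
      have := congrArg (fun T : H →L[ℂ] H => T h) hE
      simpa [comp_apply] using this
    have : (inner ℂ (J (W (h - B (X h)))) (B y) : ℂ) = inner ℂ (A (h - B (X h))) (B y) := by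
      simp [hAdef, comp_apply]
    rw [this, hv, map_neg, inner_neg_left, ← adjoint_inner_left, hz, inner_zero_left, neg_zero]
  exact ⟨⟨fun hi => h32 (h13 hi), fun hii => h31 (h23 hii)⟩, ⟨h23, h32⟩⟩
end

section
/- Let W be a Krein-selfadjoint operator on H and B ∈ L(H) with closed range such that range(B) is W-nonnegative, and let Q ∈ L(H) be a projection (Q² = Q) with range(Q) = range(B) and W ∘ Q = Q^# ∘ W. Then W(I − Q) ≤ (BX − I)^# W (BX − I) in the Krein order for every X ∈ L(H), and there exists X₀ ∈ L(H) with (BX₀ − I)^# W (BX₀ − I) = W(I − Q); that is, the minimum over X ∈ L(H) of (BX − I)^# W (BX − I) exists and equals the Schur complement W(I − Q). -/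
open ContinuousLinearMap

private lemma ringlem {R : Type*} [Ring R] [StarRing R] (M Q A : R) (hM : star M = M)
    (hQ2 : Q * Q = Q) (hc : star Q * M = M * Q) (hQA : Q * A = A) :
    star (A - (1 - Q)) * (M * (A - (1 - Q))) - M * (1 - Q) = star A * (M * A) := by
  have h1 : star (1 - Q) * (M * A) = 0 := by
    rw [star_sub, star_one, sub_mul, one_mul, ← mul_assoc, hc, mul_assoc, hQA, sub_self]
  have h2 : star A * (M * (1 - Q)) = 0 := by
    have := congrArg star h1
    simpa [star_mul, hM, mul_assoc] using this
  have hP2 : ((1:R) - Q) * (1 - Q) = 1 - Q := by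
    rw [sub_mul, one_mul, mul_sub, mul_one, hQ2, sub_self, sub_zero]
  have h3 : star (1 - Q) * (M * (1 - Q)) = M * (1 - Q) := by
    have hl : star (1 - Q) * M = M * (1 - Q) := by
      rw [star_sub, star_one, sub_mul, one_mul, hc, mul_sub, mul_one]
    rw [← mul_assoc, hl, mul_assoc, hP2]
  generalize hP : (1 : R) - Q = P at h1 h2 h3 ⊢
  rw [star_sub, mul_sub, sub_mul, mul_sub, mul_sub, h1, h2, h3]
  abel

/-- if `range B` is `W`-nonnegative and `Q` is a projection onto `range B`
with `W ∘ Q = Q^# ∘ W`, then the minimum over `X` of `(BX − I)^# W (BX − I)` exists and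
equals the Schur complement `W(I − Q)`. -/
theorem stmt6 {H : Type*} [NormedAddCommGroup H] [InnerProductSpace ℂ H] [CompleteSpace H]
    (J : H →L[ℂ] H) (hJ : IsSelfAdjoint J) (hJ2 : J ∘L J = 1)
    (W : H →L[ℂ] H) (hW : kadj J W = W)
    (B : H →L[ℂ] H) (hB : IsClosed (Set.range ⇑B))
    (hBpos : ∀ x : H, 0 ≤ (inner ℂ ((J ∘L W) (B x)) (B x) : ℂ).re)
    (Q : H →L[ℂ] H) (hQ : Q ∘L Q = Q)
    (hQran : LinearMap.range (Q : H →ₗ[ℂ] H) = LinearMap.range (B : H →ₗ[ℂ] H))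
    (hWQ : W ∘L Q = kadj J Q ∘L W) :
    (∀ X : H →L[ℂ] H,
      kLE J (W ∘L (1 - Q)) (kadj J (B ∘L X - 1) ∘L (W ∘L (B ∘L X - 1)))) ∧
    (∃ X₀ : H →L[ℂ] H,
      kadj J (B ∘L X₀ - 1) ∘L (W ∘L (B ∘L X₀ - 1)) = W ∘L (1 - Q)) := by
  have hJJ : J * J = 1 := hJ2
  have hsJ : star J = J := hJ
  have hQ' : Q * Q = Q := hQ
  have hJJT : ∀ T : H →L[ℂ] H, J * (J * T) = T := fun T => by
    rw [← mul_assoc, hJJ, one_mul]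
  have hW' : J * (star W * J) = W := by
    rw [star_eq_adjoint]; exact hW
  have hsM : star (J * W) = J * W := by
    have h : star W * J = J * W := by
      calc star W * J = J * (J * (star W * J)) := by rw [hJJT]
      _ = J * W := by rw [hW']
    rw [star_mul, hsJ, h]
  have hc : star Q * (J * W) = (J * W) * Q := by
    have hWQ' : W * Q = J * (star Q * J) * W := by
      rw [star_eq_adjoint]; exact hWQ
    calc star Q * (J * W) = J * (J * (star Q * (J * W))) := by rw [hJJT]
    _ = J * (J * (star Q * J) * W) := by simp only [mul_assoc]
    _ = J * (W * Q) := by rw [← hWQ']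
    _ = (J * W) * Q := by rw [← mul_assoc]
  have hQB : Q * B = B := by
    ext x
    have hmem : B x ∈ LinearMap.range (Q : H →ₗ[ℂ] H) := by
      rw [hQran]; exact LinearMap.mem_range_self (B : H →ₗ[ℂ] H) x
    obtain ⟨y, hy⟩ := hmem
    show Q (B x) = B x
    rw [← hy]
    calc Q (Q y) = (Q ∘L Q) y := rfl
    _ = Q y := by rw [hQ]
  have hQA : ∀ X : H →L[ℂ] H, Q * (B ∘L X - Q) = B ∘L X - Q := by
    intro X
    have : Q * (B ∘L X) = B ∘L X := by
      show Q * (B * X) = B * X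
      rw [← mul_assoc, hQB]
    rw [mul_sub, this, hQ']
  have key : ∀ X : H →L[ℂ] H,
      J ∘L (kadj J (B ∘L X - 1) ∘L (W ∘L (B ∘L X - 1)) - W ∘L (1 - Q)) =
        star (B ∘L X - Q) * ((J * W) * (B ∘L X - Q)) := by
    intro X
    have expand := ringlem (J * W) Q (B ∘L X - Q) hsM hQ' hc (hQA X)
    have hC : B ∘L X - 1 = (B ∘L X - Q) - (1 - Q) := by abel
    show J * ((J * (star (B ∘L X - 1) * J)) * (W * (B ∘L X - 1)) - W * (1 - Q)) = _
    rw [mul_sub]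
    simp only [mul_assoc]
    rw [hJJT]
    calc star (B ∘L X - 1) * (J * (W * (B ∘L X - 1))) - J * (W * (1 - Q))
        = star ((B ∘L X - Q) - (1 - Q)) * ((J * W) * ((B ∘L X - Q) - (1 - Q)))
            - (J * W) * (1 - Q) := by rw [← hC]; simp only [mul_assoc]
    _ = star (B ∘L X - Q) * ((J * W) * (B ∘L X - Q)) := expand
  constructor
  · intro X
    show (J ∘L (kadj J (B ∘L X - 1) ∘L (W ∘L (B ∘L X - 1)) - W ∘L (1 - Q))).IsPositive
    rw [key X]
    constructor
    · rw [← ContinuousLinearMap.isSelfAdjoint_iff_isSymmetric]; show star _ = _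
      rw [star_mul, star_mul, star_star, hsM, mul_assoc]
    · intro x
      rw [reApplyInnerSelf_apply]
      have hAx : Q ((B ∘L X - Q) x) = (B ∘L X - Q) x := by
        have := congrArg (fun T : H →L[ℂ] H => T x) (hQA X)
        simpa using this
      have hmem : (B ∘L X - Q) x ∈ LinearMap.range (B : H →ₗ[ℂ] H) := by
        rw [← hQran]; exact ⟨_, hAx⟩
      obtain ⟨y, hy⟩ := hmem
      have : (star (B ∘L X - Q) * ((J * W) * (B ∘L X - Q))) x
          = adjoint (B ∘L X - Q) ((J * W) ((B ∘L X - Q) x)) := by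
        rw [← star_eq_adjoint]; rfl
      rw [this, adjoint_inner_left, ← hy]
      exact hBpos y
  · -- construct X₀ with B ∘L X₀ = Q
    have hFclosed : IsClosed ((LinearMap.range (B : H →ₗ[ℂ] H) : Submodule ℂ H) : Set H) := by
      rwa [LinearMap.coe_range]
    haveI : CompleteSpace (LinearMap.range (B : H →ₗ[ℂ] H)) := hFclosed.completeSpace_coe
    haveI : CompleteSpace (LinearMap.ker (B : H →ₗ[ℂ] H)) := (isClosed_ker B).completeSpace_coe
    set K := (LinearMap.ker (B : H →ₗ[ℂ] H))ᗮ with hK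
    let G : K →L[ℂ] LinearMap.range (B : H →ₗ[ℂ] H) :=
      (B.codRestrict (LinearMap.range (B : H →ₗ[ℂ] H)) (fun x => LinearMap.mem_range_self (B : H →ₗ[ℂ] H) x)) ∘L K.subtypeL
    have hGapp : ∀ z : K, ((G z : H)) = B (z : H) := fun z => rfl
    have hGinj : LinearMap.ker (G : K →ₗ[ℂ] LinearMap.range (B : H →ₗ[ℂ] H)) = ⊥ := by
      rw [Submodule.eq_bot_iff]
      rintro z hz
      have hz' : B (z : H) = 0 := congrArg Subtype.val hz
      have h1 : (z : H) ∈ LinearMap.ker (B : H →ₗ[ℂ] H) := hz'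
      have h2 : (z : H) ∈ (LinearMap.ker (B : H →ₗ[ℂ] H))ᗮ := z.2
      have : (z : H) = 0 := by
        have := Submodule.inner_right_of_mem_orthogonal h1 h2
        simpa [inner_self_eq_zero] using this
      exact Subtype.ext this
    have hGsurj : LinearMap.range (G : K →ₗ[ℂ] LinearMap.range (B : H →ₗ[ℂ] H)) = ⊤ := by
      rw [LinearMap.range_eq_top]
      rintro ⟨y, x, rfl⟩
      refine ⟨⟨x - (Submodule.orthogonalProjection (LinearMap.ker (B : H →ₗ[ℂ] H)) x : H), ?_⟩, ?_⟩
      · exact Submodule.sub_starProjection_mem_orthogonal x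
      · apply Subtype.ext
        show B (x - (Submodule.orthogonalProjection (LinearMap.ker (B : H →ₗ[ℂ] H)) x : H)) = B x
        have hk : B ((Submodule.orthogonalProjection (LinearMap.ker (B : H →ₗ[ℂ] H)) x : H)) = 0 :=
          (Submodule.orthogonalProjection (LinearMap.ker (B : H →ₗ[ℂ] H)) x).2
        rw [map_sub, hk, sub_zero]
    let e := ContinuousLinearEquiv.ofBijective G hGinj hGsurj
    have hQmem : ∀ x, Q x ∈ LinearMap.range (B : H →ₗ[ℂ] H) := by
      intro x; rw [← hQran]; exact LinearMap.mem_range_self (Q : H →ₗ[ℂ] H) x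
    refine ⟨K.subtypeL ∘L (e.symm.toContinuousLinearMap ∘L
      (Q.codRestrict (LinearMap.range (B : H →ₗ[ℂ] H)) hQmem)), ?_⟩
    set X₀ : H →L[ℂ] H := K.subtypeL ∘L (e.symm.toContinuousLinearMap ∘L
      (Q.codRestrict (LinearMap.range (B : H →ₗ[ℂ] H)) hQmem)) with hX₀
    have hBX₀ : B ∘L X₀ = Q := by
      ext x
      show B ((e.symm ⟨Q x, hQmem x⟩ : K) : H) = Q x
      have h1 : e (e.symm ⟨Q x, hQmem x⟩) = ⟨Q x, hQmem x⟩ :=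
        e.apply_symm_apply _
      have h2 : (G (e.symm ⟨Q x, hQmem x⟩) : H) = Q x := by
        rw [show G (e.symm ⟨Q x, hQmem x⟩) = e (e.symm ⟨Q x, hQmem x⟩) from rfl, h1]
      rw [← hGapp]; exact h2
    have h := key X₀
    rw [hBX₀] at h
    have h0 : star (Q - Q) * ((J * W) * (Q - Q)) = 0 := by
      simp [sub_self]
    rw [h0] at h
    have h' : J * (kadj J (Q - 1) ∘L (W ∘L (Q - 1)) - W ∘L (1 - Q)) = 0 := h
    have hD : kadj J (Q - 1) ∘L (W ∘L (Q - 1)) - W ∘L (1 - Q) = 0 := by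
      rw [← hJJT (kadj J (Q - 1) ∘L (W ∘L (Q - 1)) - W ∘L (1 - Q)), h', mul_zero]
    rw [hBX₀]
    exact sub_eq_zero.mp hD
end

section
/- Let W be a Krein-selfadjoint operator on H, B ∈ L(H) with closed range and C ∈ L(H). Then the following are equivalent: (i) there exists X₀ ∈ L(H) such that (BX₀ − C)^# W (BX₀ − C) ≤ (BX − C)^# W (BX − C) in the Krein order for every X ∈ L(H); (ii) range(B) is W-nonnegative and range(C) ⊆ range(B) + W⁻¹(range(B)^[⊥]); (iii) range(B) is W-nonnegative and the normal equation B^# W (BX − C) = 0 admits a solution X ∈ L(H). Moreover, if range(B) is W-nonnegative, then X₀ ∈ L(H) satisfies (BX₀ − C)^# W (BX₀ − C) ≤ (BX − C)^# W (BX − C) for every X ∈ L(H) if and only if B^# W (BX₀ − C) = 0. -/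
open ContinuousLinearMap

section Aux

variable {H : Type*} [NormedAddCommGroup H] [InnerProductSpace ℂ H] [CompleteSpace H]

local notation "⟪" x ", " y "⟫" => @inner ℂ _ _ x y

/-- A pointwise-range version of Douglas' lemma: if every `D x` lies in the range of `T`,
then `D = T ∘ X` for some bounded operator `X` (via the closed graph theorem). -/
lemma douglas_aux (T D : H →L[ℂ] H) (h : ∀ x, ∃ w, T w = D x) :
    ∃ X : H →L[ℂ] H, T ∘L X = D := by
  set K : Submodule ℂ H := LinearMap.ker (T : H →ₗ[ℂ] H) with hK
  have hKc : IsClosed (K : Set H) := isClosed_ker T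
  haveI : CompleteSpace K := hKc.completeSpace_coe
  have hmemK : ∀ w : H, T w = 0 → w ∈ K := fun w hw => LinearMap.mem_ker.mpr hw
  have hPzero : ∀ w : H, w ∈ K → (Submodule.orthogonalProjectionOnto Kᗮ w : H) = 0 := by
    intro w hw
    have hww : w ∈ Kᗮᗮ := K.le_orthogonal_orthogonal hw
    rw [Submodule.orthogonalProjectionOnto_apply_of_mem_orthogonal hww]
    simp
  have hTP : ∀ w : H, T (Submodule.orthogonalProjectionOnto Kᗮ w : H) = T w := by
    intro w
    conv_rhs => rw [← Submodule.starProjection_add_starProjection_orthogonal (K := K) w,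
      Submodule.starProjection_apply, Submodule.starProjection_apply]
    rw [map_add]
    have h0 : T ((Submodule.orthogonalProjectionOnto K w : H)) = 0 := (Submodule.orthogonalProjectionOnto K w).2
    rw [h0, zero_add]
  have huniq : ∀ w w' : H, T w = T w' →
      (Submodule.orthogonalProjectionOnto Kᗮ w : H) = (Submodule.orthogonalProjectionOnto Kᗮ w' : H) := by
    intro w w' hww
    have hm : w - w' ∈ K := hmemK _ (by rw [map_sub, hww, sub_self])
    have h0 := hPzero _ hm
    rw [map_sub] at h0
    have h1 : (Submodule.orthogonalProjectionOnto Kᗮ w : H) - (Submodule.orthogonalProjectionOnto Kᗮ w' : H) = 0 := h0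
    exact sub_eq_zero.mp h1
  let g : H → H := fun x => (Submodule.orthogonalProjectionOnto Kᗮ (h x).choose : H)
  have hTg : ∀ x, T (g x) = D x := fun x => by
    rw [hTP]; exact (h x).choose_spec
  have hgmem : ∀ x, g x ∈ Kᗮ := fun x => SetLike.coe_mem _
  have hg_eq : ∀ (x : H) (w : H), T w = D x → g x = (Submodule.orthogonalProjectionOnto Kᗮ w : H) := by
    intro x w hw
    exact huniq _ _ (by rw [(h x).choose_spec, hw])
  have hadd : ∀ x y, g (x + y) = g x + g y := by
    intro x y
    have : T ((h x).choose + (h y).choose) = D (x + y) := by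
      rw [map_add, (h x).choose_spec, (h y).choose_spec, map_add]
    rw [hg_eq (x + y) _ this, map_add]
    rfl
  have hsmul : ∀ (c : ℂ) (x : H), g (c • x) = c • g x := by
    intro c x
    have : T (c • (h x).choose) = D (c • x) := by
      rw [map_smul, (h x).choose_spec, map_smul]
    rw [hg_eq (c • x) _ this, map_smul]
    rfl
  let gl : H →ₗ[ℂ] H := { toFun := g, map_add' := hadd, map_smul' := hsmul }
  have hcont : Continuous gl := by
    apply gl.continuous_of_seq_closed_graph
    intro u x y hux huy
    have h1 : T y = D x := by
      have t1 : Filter.Tendsto (fun n => T (gl (u n))) Filter.atTop (nhds (T y)) :=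
        (T.continuous.tendsto y).comp huy
      have t2 : Filter.Tendsto (fun n => D (u n)) Filter.atTop (nhds (D x)) :=
        (D.continuous.tendsto x).comp hux
      have heq : (fun n => T (gl (u n))) = fun n => D (u n) := by
        funext n; exact hTg (u n)
      rw [heq] at t1
      exact tendsto_nhds_unique t1 t2
    have hy : y ∈ Kᗮ := by
      have hcl : IsClosed (Kᗮ : Set H) := K.isClosed_orthogonal
      exact hcl.mem_of_tendsto huy (Filter.Eventually.of_forall fun n => hgmem (u n))
    have hker : y - gl x ∈ K :=
      hmemK _ (by rw [map_sub, h1]; rw [show T (gl x) = D x from hTg x, sub_self])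
    have horth : y - gl x ∈ Kᗮ := Kᗮ.sub_mem hy (hgmem x)
    have hz : y - gl x = 0 := by
      have := K.orthogonal_disjoint.le_bot ⟨hker, horth⟩
      simpa using this
    exact sub_eq_zero.mp hz
  refine ⟨⟨gl, hcont⟩, ?_⟩
  ext x
  exact hTg x

/-- The quadratic operator `(BX - C)^* A (BX - C)`. -/
noncomputable def Qop (A B C : H →L[ℂ] H) (X : H →L[ℂ] H) : H →L[ℂ] H :=
  adjoint (B ∘L X - C) ∘L (A ∘L (B ∘L X - C))

lemma Qop_selfAdjoint (A B C : H →L[ℂ] H) (hA : IsSelfAdjoint A) (X : H →L[ℂ] H) :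
    IsSelfAdjoint (Qop A B C X) := by
  rw [isSelfAdjoint_iff']
  unfold Qop
  rw [adjoint_comp, adjoint_comp, adjoint_adjoint, hA.adjoint_eq, ← comp_assoc]

lemma Qop_inner_diff (A B C : H →L[ℂ] H) (X₀ X : H →L[ℂ] H) (x : H) :
    ⟪(Qop A B C X - Qop A B C X₀) x, x⟫ =
      ⟪A ((B ∘L X₀ - C) x), B ((X - X₀) x)⟫ +
      ⟪A (B ((X - X₀) x)), (B ∘L X₀ - C) x⟫ +
      ⟪A (B ((X - X₀) x)), B ((X - X₀) x)⟫ := by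
  have hMx : (B ∘L X - C) x = (B ∘L X₀ - C) x + B ((X - X₀) x) := by
    simp only [sub_apply, comp_apply, map_sub]
    abel
  have h1 : ⟪(Qop A B C X) x, x⟫ = ⟪A ((B ∘L X - C) x), (B ∘L X - C) x⟫ := by
    simp only [Qop, comp_apply, adjoint_inner_left]
  have h2 : ⟪(Qop A B C X₀) x, x⟫ = ⟪A ((B ∘L X₀ - C) x), (B ∘L X₀ - C) x⟫ := by
    simp only [Qop, comp_apply, adjoint_inner_left]
  rw [sub_apply, inner_sub_left, h1, h2, hMx, map_add, inner_add_left, inner_add_right,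
    inner_add_right]
  ring

lemma normal_imp_min (A B C : H →L[ℂ] H) (hA : IsSelfAdjoint A)
    (hpos : ∀ x : H, 0 ≤ (⟪A (B x), B x⟫).re) (X₀ : H →L[ℂ] H)
    (h0 : adjoint B ∘L (A ∘L (B ∘L X₀ - C)) = 0) (X : H →L[ℂ] H) :
    (Qop A B C X - Qop A B C X₀).IsPositive := by
  constructor
  · exact ((Qop_selfAdjoint A B C hA X).sub (Qop_selfAdjoint A B C hA X₀)).isSymmetric
  · intro x
    rw [reApplyInnerSelf_apply, Qop_inner_diff]
    have hBAe : adjoint B (A ((B ∘L X₀ - C) x)) = 0 := by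
      have h0x := congrArg (fun T : H →L[ℂ] H => T x) h0
      simpa only [comp_apply, zero_apply] using h0x
    have t1 : ⟪A ((B ∘L X₀ - C) x), B ((X - X₀) x)⟫ = 0 := by
      rw [← adjoint_inner_left, hBAe, inner_zero_left]
    have t2 : ⟪A (B ((X - X₀) x)), (B ∘L X₀ - C) x⟫ = 0 := by
      have hsym : ⟪A (B ((X - X₀) x)), (B ∘L X₀ - C) x⟫ =
          ⟪B ((X - X₀) x), A ((B ∘L X₀ - C) x)⟫ := hA.isSymmetric _ _
      rw [hsym, ← inner_conj_symm, t1, map_zero]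
    rw [t1, t2, zero_add, zero_add]
    simpa using hpos ((X - X₀) x)

lemma min_imp_normal (A B C : H →L[ℂ] H) (hA : IsSelfAdjoint A) (X₀ : H →L[ℂ] H)
    (hmin : ∀ X : H →L[ℂ] H, (Qop A B C X - Qop A B C X₀).IsPositive) :
    (∀ x : H, 0 ≤ (⟪A (B x), B x⟫).re) ∧ adjoint B ∘L (A ∘L (B ∘L X₀ - C)) = 0 := by
  have key : ∀ (x : H) (t : ℂ),
      0 ≤ 2 * (t * ⟪A ((B ∘L X₀ - C) x), B x⟫).re +
        Complex.normSq t * (⟪A (B x), B x⟫).re := by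
    intro x t
    have h := (hmin (X₀ + t • 1)).2 x
    rw [reApplyInnerSelf_apply, Qop_inner_diff] at h
    have hsx : ((X₀ + t • 1 : H →L[ℂ] H) - X₀) x = t • x := by simp
    rw [hsx, map_smul, map_smul] at h
    have hconj : ⟪A (B x), (B ∘L X₀ - C) x⟫ =
        (starRingEnd ℂ) ⟪A ((B ∘L X₀ - C) x), B x⟫ := by
      have hsym : ⟪A (B x), (B ∘L X₀ - C) x⟫ = ⟪B x, A ((B ∘L X₀ - C) x)⟫ :=
        hA.isSymmetric _ _
      rw [hsym, ← inner_conj_symm]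
    rw [inner_smul_right, inner_smul_left, inner_smul_left, inner_smul_right, hconj,
      RCLike.re_to_complex] at h
    set c := ⟪A ((B ∘L X₀ - C) x), B x⟫ with hc
    have hre : (t * c + (starRingEnd ℂ) t * (starRingEnd ℂ) c +
        (starRingEnd ℂ) t * (t * ⟪A (B x), B x⟫)).re =
        2 * (t * c).re + Complex.normSq t * (⟪A (B x), B x⟫).re := by
      have h1 : (starRingEnd ℂ) t * (starRingEnd ℂ) c = (starRingEnd ℂ) (t * c) := by
        rw [map_mul]
      have h2 : (starRingEnd ℂ) t * (t * ⟪A (B x), B x⟫) =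
          (Complex.normSq t : ℂ) * ⟪A (B x), B x⟫ := by
        rw [← mul_assoc, ← Complex.normSq_eq_conj_mul_self]
      rw [h1, h2]
      simp only [Complex.add_re, Complex.conj_re, Complex.re_ofReal_mul]
      ring
    rw [hre] at h
    exact h
  have hzero : ∀ x : H, ⟪A ((B ∘L X₀ - C) x), B x⟫ = 0 := by
    intro x
    set c := ⟪A ((B ∘L X₀ - C) x), B x⟫ with hc
    set r := (⟪A (B x), B x⟫).re with hr
    by_contra hne
    have hm : 0 < Complex.normSq c := by
      simpa [Complex.normSq_pos] using hne
    set m := Complex.normSq c with hmdef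
    have habs : 0 < |r| + 1 := by positivity
    set s : ℝ := -1 / (|r| + 1) with hsdef
    have hs_neg : s < 0 := div_neg_of_neg_of_pos (by norm_num) habs
    have h := key x ((s : ℂ) * (starRingEnd ℂ) c)
    have h1 : ((s : ℂ) * (starRingEnd ℂ) c * c).re = s * m := by
      rw [mul_assoc, ← Complex.normSq_eq_conj_mul_self]
      simp [hmdef]
    have h2 : Complex.normSq ((s : ℂ) * (starRingEnd ℂ) c) = s ^ 2 * m := by
      rw [Complex.normSq_mul, Complex.normSq_conj, Complex.normSq_ofReal]
      ring
    rw [h1, h2, ← hr] at h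
    have habs_s : |s| = 1 / (|r| + 1) := by
      rw [hsdef, abs_div, abs_neg, abs_one, abs_of_pos habs]
    have h3 : |s * r| ≤ 1 := by
      rw [abs_mul, habs_s, div_mul_eq_mul_div, div_le_one habs]
      nlinarith [abs_nonneg r]
    have hsr : 1 ≤ 2 + s * r := by nlinarith [neg_abs_le (s * r)]
    have hsm : s * m < 0 := mul_neg_of_neg_of_pos hs_neg hm
    have hfull : (s * m) * (2 + s * r) < 0 :=
      mul_neg_of_neg_of_pos hsm (by linarith)
    have heq : 2 * (s * m) + s ^ 2 * m * r = (s * m) * (2 + s * r) := by ring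
    linarith [h, hfull, heq.ge, heq.le]
  refine ⟨fun x => ?_, ?_⟩
  · have h := key x 1
    rw [hzero x] at h
    simpa using h
  · have hc0 : ∀ x : H, ⟪(adjoint B ∘L (A ∘L (B ∘L X₀ - C))) x, x⟫ = 0 := by
      intro x
      have hval : ⟪(adjoint B ∘L (A ∘L (B ∘L X₀ - C))) x, x⟫ =
          ⟪A ((B ∘L X₀ - C) x), B x⟫ := by
        simp only [comp_apply, adjoint_inner_left]
      rw [hval, hzero x]
    have hlin := (inner_map_self_eq_zero
      ((adjoint B ∘L (A ∘L (B ∘L X₀ - C)) : H →L[ℂ] H) : H →ₗ[ℂ] H)).mp hc0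
    ext x
    have h4 := LinearMap.congr_fun hlin x
    simpa using h4

end Aux

/-- characterization of the existence of a `W`-indefinite minimum solution
of `BX − C = 0`, and identification of the minimizers with the solutions of the normal
equation `B^# W (BX − C) = 0`. -/
theorem stmt7 {H : Type*} [NormedAddCommGroup H] [InnerProductSpace ℂ H] [CompleteSpace H]
    (J : H →L[ℂ] H) (hJ : IsSelfAdjoint J) (hJ2 : J ∘L J = 1)
    (W : H →L[ℂ] H) (hW : kadj J W = W)
    (B : H →L[ℂ] H) (hB : IsClosed (Set.range ⇑B)) (C : H →L[ℂ] H) :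
    ((∃ X₀ : H →L[ℂ] H, ∀ X : H →L[ℂ] H,
        kLE J (kadj J (B ∘L X₀ - C) ∘L (W ∘L (B ∘L X₀ - C)))
          (kadj J (B ∘L X - C) ∘L (W ∘L (B ∘L X - C)))) ↔
      ((∀ x : H, 0 ≤ (inner ℂ ((J ∘L W) (B x)) (B x) : ℂ).re) ∧
        ∀ x : H, ∃ u v : H, C x = B u + v ∧
          ∀ y : H, (inner ℂ (J (W v)) (B y) : ℂ) = 0)) ∧
    (((∀ x : H, 0 ≤ (inner ℂ ((J ∘L W) (B x)) (B x) : ℂ).re) ∧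
        ∀ x : H, ∃ u v : H, C x = B u + v ∧
          ∀ y : H, (inner ℂ (J (W v)) (B y) : ℂ) = 0) ↔
      ((∀ x : H, 0 ≤ (inner ℂ ((J ∘L W) (B x)) (B x) : ℂ).re) ∧
        ∃ X : H →L[ℂ] H, kadj J B ∘L (W ∘L (B ∘L X - C)) = 0)) ∧
    ((∀ x : H, 0 ≤ (inner ℂ ((J ∘L W) (B x)) (B x) : ℂ).re) →
      ∀ X₀ : H →L[ℂ] H,
        ((∀ X : H →L[ℂ] H,
            kLE J (kadj J (B ∘L X₀ - C) ∘L (W ∘L (B ∘L X₀ - C)))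
              (kadj J (B ∘L X - C) ∘L (W ∘L (B ∘L X - C)))) ↔
          kadj J B ∘L (W ∘L (B ∘L X₀ - C)) = 0)) := by
  have hJ1 : ∀ z : H, J (J z) = z := by
    intro z
    have h := congrArg (fun T : H →L[ℂ] H => T z) hJ2
    simpa using h
  have hA : IsSelfAdjoint (J ∘L W) := by
    rw [isSelfAdjoint_iff']
    have hWadj : ∀ z : H, adjoint W (J z) = J (W z) := by
      intro z
      have h := congrArg (fun T : H →L[ℂ] H => T z) hW
      simp only [kadj, comp_apply] at h
      have h2 := congrArg J h
      rw [hJ1] at h2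
      exact h2
    ext x
    rw [adjoint_comp, hJ.adjoint_eq]
    simp only [comp_apply]
    exact hWadj x
  have trans1 : ∀ M N : H →L[ℂ] H,
      kadj J M ∘L (W ∘L N) = J ∘L (adjoint M ∘L ((J ∘L W) ∘L N)) := by
    intro M N
    ext x
    simp [kadj, comp_apply, hJ1]
  have transJ0 : ∀ T : H →L[ℂ] H, J ∘L T = 0 ↔ T = 0 := by
    intro T
    constructor
    · intro h
      ext x
      have h2 := congrArg (fun S : H →L[ℂ] H => J (S x)) h
      simpa [comp_apply, hJ1] using h2
    · intro h
      rw [h]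
      ext x
      simp
  have hkle : ∀ X₀ X : H →L[ℂ] H,
      (kLE J (kadj J (B ∘L X₀ - C) ∘L (W ∘L (B ∘L X₀ - C)))
        (kadj J (B ∘L X - C) ∘L (W ∘L (B ∘L X - C)))) ↔
      (Qop (J ∘L W) B C X - Qop (J ∘L W) B C X₀).IsPositive := by
    intro X₀ X
    unfold kLE
    rw [trans1, trans1]
    have heq : J ∘L (J ∘L (adjoint (B ∘L X - C) ∘L ((J ∘L W) ∘L (B ∘L X - C))) -
        J ∘L (adjoint (B ∘L X₀ - C) ∘L ((J ∘L W) ∘L (B ∘L X₀ - C)))) =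
        Qop (J ∘L W) B C X - Qop (J ∘L W) B C X₀ := by
      ext x
      simp [Qop, comp_apply, sub_apply, map_sub, hJ1]
    rw [heq]
  have hnormal : ∀ X : H →L[ℂ] H,
      (kadj J B ∘L (W ∘L (B ∘L X - C)) = 0) ↔
      (adjoint B ∘L ((J ∘L W) ∘L (B ∘L X - C)) = 0) := by
    intro X
    rw [trans1]
    exact transJ0 _
  have hii_to_normal :
      (∀ x : H, ∃ u v : H, C x = B u + v ∧ ∀ y : H, (inner ℂ (J (W v)) (B y) : ℂ) = 0) →
      ∃ X : H →L[ℂ] H, adjoint B ∘L ((J ∘L W) ∘L (B ∘L X - C)) = 0 := by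
    intro h
    have hdom : ∀ x : H, ∃ w : H,
        (adjoint B ∘L ((J ∘L W) ∘L B)) w = (adjoint B ∘L ((J ∘L W) ∘L C)) x := by
      intro x
      obtain ⟨u, v, hCx, hv⟩ := h x
      refine ⟨u, ?_⟩
      have hv0 : adjoint B (J (W v)) = 0 := by
        have h1 : ∀ y : H, (inner ℂ (adjoint B (J (W v))) y : ℂ) = 0 := by
          intro y
          rw [adjoint_inner_left]
          exact hv y
        have h2 := h1 (adjoint B (J (W v)))
        exact inner_self_eq_zero.mp h2
      simp only [comp_apply]
      rw [hCx, map_add, map_add, map_add, hv0, add_zero]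
    obtain ⟨X, hX⟩ := douglas_aux (adjoint B ∘L ((J ∘L W) ∘L B))
        (adjoint B ∘L ((J ∘L W) ∘L C)) hdom
    refine ⟨X, ?_⟩
    ext x
    have hx := congrArg (fun S : H →L[ℂ] H => S x) hX
    simp only [comp_apply] at hx
    show (adjoint B) ((J ∘L W) ((B ∘L X - C) x)) = 0
    have hgoal : (adjoint B) ((J ∘L W) ((B ∘L X - C) x)) =
        (adjoint B) (J (W (B (X x)))) - (adjoint B) (J (W (C x))) := by
      simp only [comp_apply, sub_apply, map_sub]
    rw [hgoal, hx, sub_self]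
  have hnormal_to_ii :
      (∃ X : H →L[ℂ] H, adjoint B ∘L ((J ∘L W) ∘L (B ∘L X - C)) = 0) →
      ∀ x : H, ∃ u v : H, C x = B u + v ∧
        ∀ y : H, (inner ℂ (J (W v)) (B y) : ℂ) = 0 := by
    rintro ⟨X, hX⟩ x
    refine ⟨X x, C x - B (X x), by abel, fun y => ?_⟩
    have hx := congrArg (fun S : H →L[ℂ] H => S x) hX
    simp only [comp_apply, sub_apply, zero_apply] at hx
    have hadj : adjoint B (J (W (C x - B (X x)))) = 0 := by
      have hswap : C x - B (X x) = -(B (X x) - C x) := by abel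
      rw [hswap, map_neg, map_neg, map_neg, hx, neg_zero]
    rw [← adjoint_inner_left, hadj, inner_zero_left]
  refine ⟨?_, ?_, ?_⟩
  · constructor
    · rintro ⟨X₀, hmin⟩
      have h2 := min_imp_normal (J ∘L W) B C hA X₀ (fun X => (hkle X₀ X).mp (hmin X))
      exact ⟨h2.1, hnormal_to_ii ⟨X₀, h2.2⟩⟩
    · rintro ⟨hpos, hii⟩
      obtain ⟨X, hX⟩ := hii_to_normal hii
      exact ⟨X, fun X' => (hkle X X').mpr (normal_imp_min (J ∘L W) B C hA hpos X hX X')⟩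
  · constructor
    · rintro ⟨hpos, hii⟩
      obtain ⟨X, hX⟩ := hii_to_normal hii
      exact ⟨hpos, X, (hnormal X).mpr hX⟩
    · rintro ⟨hpos, X, hX⟩
      exact ⟨hpos, hnormal_to_ii ⟨X, (hnormal X).mp hX⟩⟩
  · intro hpos X₀
    constructor
    · intro hmin
      rw [hnormal X₀]
      exact (min_imp_normal (J ∘L W) B C hA X₀ (fun X => (hkle X₀ X).mp (hmin X))).2
    · intro hn X
      rw [hnormal X₀] at hn
      exact (hkle X₀ X).mpr (normal_imp_min (J ∘L W) B C hA hpos X₀ hn X)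
end

section
/- Let W be a Krein-selfadjoint operator on H and B ∈ L(H) with closed range. Then there exist B₊, B₋ ∈ L(H) such that B = B₊ + B₋, range(B₊) and range(B₋) are closed, range(B₊) is W-nonnegative, range(B₋) is W-nonpositive, ⟨u, v⟩ = 0 and ⟨(J∘W)u, v⟩ = 0 for all u ∈ range(B₊) and v ∈ range(B₋), and range(B) = range(B₊) + range(B₋). -/
open ContinuousLinearMap

set_option maxHeartbeats 2000000 in
/-- any closed-range `B` decomposes as `B = B₊ + B₋` with `range B₊` closed
and `W`-nonnegative, `range B₋` closed and `W`-nonpositive, the two ranges orthogonal both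
in the Hilbert and in the `W`-indefinite inner products, and
`range B = range B₊ + range B₋`. -/
theorem stmt9 {H : Type*} [NormedAddCommGroup H] [InnerProductSpace ℂ H] [CompleteSpace H]
    (J : H →L[ℂ] H) (hJ : IsSelfAdjoint J) (hJ2 : J ∘L J = 1)
    (W : H →L[ℂ] H) (hW : kadj J W = W)
    (B : H →L[ℂ] H) (hB : IsClosed (Set.range ⇑B)) :
    ∃ Bp Bm : H →L[ℂ] H,
      B = Bp + Bm ∧
      IsClosed (Set.range ⇑Bp) ∧ IsClosed (Set.range ⇑Bm) ∧
      (∀ x : H, 0 ≤ (inner ℂ ((J ∘L W) (Bp x)) (Bp x) : ℂ).re) ∧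
      (∀ x : H, (inner ℂ ((J ∘L W) (Bm x)) (Bm x) : ℂ).re ≤ 0) ∧
      (∀ x y : H, (inner ℂ (Bp x) (Bm y) : ℂ) = 0) ∧
      (∀ x y : H, (inner ℂ ((J ∘L W) (Bp x)) (Bm y) : ℂ) = 0) ∧
      LinearMap.range (B : H →ₗ[ℂ] H) = LinearMap.range (Bp : H →ₗ[ℂ] H) ⊔ LinearMap.range (Bm : H →ₗ[ℂ] H) := by
  classical
  set A : H →L[ℂ] H := J ∘L W with hA_def
  have hJ1 : ∀ y : H, J (J y) = y := by
    intro y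
    have := congrArg (fun T : H →L[ℂ] H => T y) hJ2
    simpa using this
  have hA : IsSelfAdjoint A := by
    rw [ContinuousLinearMap.isSelfAdjoint_iff']
    rw [hA_def, ContinuousLinearMap.adjoint_comp, ContinuousLinearMap.isSelfAdjoint_iff'.mp hJ]
    ext x
    have h2 : J (adjoint W (J x)) = W x := by
      have := congrArg (fun T : H →L[ℂ] H => T x) hW
      simpa [kadj] using this
    show adjoint W (J x) = J (W x)
    calc adjoint W (J x) = J (J (adjoint W (J x))) := (hJ1 _).symm
      _ = J (W x) := by rw [h2]
  have hAsym : ∀ x y : H, (inner ℂ (A x) y : ℂ) = inner ℂ x (A y) :=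
    fun x y => (ContinuousLinearMap.isSelfAdjoint_iff_isSymmetric.mp hA) x y
  set M : Submodule ℂ H := LinearMap.range (B : H →ₗ[ℂ] H) with hM
  have hMclosed : IsClosed (M : Set H) := by
    rw [hM]
    simpa [LinearMap.coe_range] using hB
  haveI : CompleteSpace M := hMclosed.completeSpace_coe
  set B' : H →L[ℂ] M := B.codRestrict M (fun x => ⟨x, rfl⟩) with hB'
  have hB'surj : ∀ m : M, ∃ x, B' x = m := by
    intro m
    obtain ⟨x, hx⟩ := m.2
    exact ⟨x, Subtype.ext hx⟩
  haveI hcfc1 : ContinuousFunctionalCalculus ℂ (↥M →L[ℂ] ↥M) (IsStarNormal : (↥M →L[ℂ] ↥M) → Prop) :=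
    IsStarNormal.instContinuousFunctionalCalculus (A := ↥M →L[ℂ] ↥M)
  haveI hcfc2 : ContinuousFunctionalCalculus ℝ (↥M →L[ℂ] ↥M) (IsSelfAdjoint : (↥M →L[ℂ] ↥M) → Prop) :=
    IsSelfAdjoint.instContinuousFunctionalCalculus (A := ↥M →L[ℂ] ↥M)
  set T : M →L[ℂ] M := M.orthogonalProjectionOnto ∘L A ∘L M.subtypeL with hTdef
  have hkey : ∀ u v : M, (inner ℂ (T u) v : ℂ) = inner ℂ (A (u : H)) ((v : H)) := fun u v =>
    Submodule.inner_orthogonalProjectionOnto_eq_of_mem_right (K := M) v (A (u : H))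
  have hT : IsSelfAdjoint T := by
    rw [ContinuousLinearMap.isSelfAdjoint_iff_isSymmetric]
    intro u v
    show (inner ℂ (T u) v : ℂ) = inner ℂ u (T v)
    calc (inner ℂ (T u) v : ℂ) = inner ℂ (A (u : H)) ((v : H)) := hkey u v
      _ = inner ℂ ((u : H)) (A (v : H)) := hAsym _ _
      _ = starRingEnd ℂ (inner ℂ (A (v : H)) ((u : H))) := (inner_conj_symm _ _).symm
      _ = starRingEnd ℂ (inner ℂ (T v) u : ℂ) := by rw [hkey]
      _ = inner ℂ u (T v) := inner_conj_symm _ _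
  set Tp : M →L[ℂ] M := cfc (fun x : ℝ => max x 0) T with hTp
  set Tm : M →L[ℂ] M := cfc (fun x : ℝ => max (-x) 0) T with hTm
  have hsub : Tp - Tm = T := by
    rw [hTp, hTm, ← cfc_sub (fun x : ℝ => max x 0) (fun x : ℝ => max (-x) 0) T]
    have : (fun x : ℝ => max x 0 - max (-x) 0) = fun x : ℝ => x := by
      funext x
      rcases le_total 0 x with h | h
      · rw [max_eq_left h, max_eq_right (by linarith : -x ≤ 0), sub_zero]
      · rw [max_eq_right h, max_eq_left (by linarith : 0 ≤ -x)]; ring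
    rw [this, cfc_id' ℝ T]
  have hmul : Tp * Tm = 0 := by
    rw [hTp, hTm, ← cfc_mul (fun x : ℝ => max x 0) (fun x : ℝ => max (-x) 0) T]
    have : (fun x : ℝ => max x 0 * max (-x) 0) = fun _ : ℝ => (0 : ℝ) := by
      funext x
      rcases le_total 0 x with h | h
      · rw [max_eq_right (by linarith : -x ≤ 0), mul_zero]
      · rw [max_eq_right h, zero_mul]
    rw [this]
    exact cfc_const_zero ℝ T
  have hTppos : Tp.IsPositive := by
    rw [← ContinuousLinearMap.nonneg_iff_isPositive, hTp]
    exact cfc_nonneg fun x _ => le_max_right x 0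
  have hTmpos : Tm.IsPositive := by
    rw [← ContinuousLinearMap.nonneg_iff_isPositive, hTm]
    exact cfc_nonneg fun x _ => le_max_right (-x) 0
  have hTpsym : ∀ u v : M, (inner ℂ (Tp u) v : ℂ) = inner ℂ u (Tp v) :=
    fun u v => (ContinuousLinearMap.isSelfAdjoint_iff_isSymmetric.mp hTppos.isSelfAdjoint) u v
  have hTmsym : ∀ u v : M, (inner ℂ (Tm u) v : ℂ) = inner ℂ u (Tm v) :=
    fun u v => (ContinuousLinearMap.isSelfAdjoint_iff_isSymmetric.mp hTmpos.isSelfAdjoint) u v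
  set N : Submodule ℂ M := LinearMap.ker (Tm : M →ₗ[ℂ] M) with hN
  have hNclosed : IsClosed (N : Set M) := by
    rw [hN]; exact ContinuousLinearMap.isClosed_ker Tm
  haveI : CompleteSpace N := hNclosed.completeSpace_coe
  have hTpTm : ∀ z : M, Tp (Tm z) = 0 := by
    intro z
    have := congrArg (fun S : M →L[ℂ] M => S z) hmul
    simpa [ContinuousLinearMap.mul_apply] using this
  -- elements of `Nᗮ` are killed by `Tp`
  have hperp : ∀ v : M, v ∈ Nᗮ → Tp v = 0 := by
    have h1 : N = (LinearMap.range (Tm : M →ₗ[ℂ] M))ᗮ := by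
      ext x
      constructor
      · intro hx
        rw [Submodule.mem_orthogonal]
        rintro y ⟨z, rfl⟩
        have hx0 : Tm x = 0 := hx
        show (inner ℂ (Tm z) x : ℂ) = 0
        rw [hTmsym, hx0, inner_zero_right]
      · intro hx
        have h0 : (inner ℂ (Tm x) (Tm x) : ℂ) = 0 := by
          rw [hTmsym]
          exact (Submodule.mem_orthogonal' _ _).mp hx _ ⟨Tm x, rfl⟩
        exact inner_self_eq_zero.mp h0
    have h2 : Nᗮ ≤ LinearMap.ker (Tp : M →ₗ[ℂ] M) := by
      rw [h1, Submodule.orthogonal_orthogonal_eq_closure]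
      refine Submodule.topologicalClosure_minimal _ ?_ (ContinuousLinearMap.isClosed_ker Tp)
      rintro y ⟨z, rfl⟩
      exact LinearMap.mem_ker.mpr (hTpTm z)
    exact fun v hv => h2 hv
  set Q : M →L[ℂ] M := N.subtypeL ∘L N.orthogonalProjectionOnto with hQ
  have hQmemN : ∀ m : M, Q m ∈ N := fun m => (N.orthogonalProjectionOnto m).2
  have hQperp : ∀ m : M, m - Q m ∈ Nᗮ := fun m => Submodule.sub_starProjection_mem_orthogonal (K := N) m
  have hQfix : ∀ n : M, n ∈ N → Q n = n := fun n hn => Submodule.starProjection_eq_self_iff.mpr hn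
  have hQzero : ∀ v : M, v ∈ Nᗮ → Q v = 0 := by
    intro v hv
    show (↑(N.orthogonalProjectionOnto v) : M) = 0
    rw [Submodule.orthogonalProjectionOnto_apply_of_mem_orthogonal hv]
    rfl
  set Bp : H →L[ℂ] H := M.subtypeL ∘L Q ∘L B' with hBpdef
  set Bm : H →L[ℂ] H := B - Bp with hBmdef
  have hBp : ∀ x : H, Bp x = ((Q (B' x) : M) : H) := fun x => rfl
  have hBm : ∀ x : H, Bm x = ((B' x - Q (B' x) : M) : H) := by
    intro x
    show B x - Bp x = _
    rw [hBp]
    push_cast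
    rfl
  -- the quadratic form computation
  have hformN : ∀ n : M, n ∈ N → (inner ℂ (A (n : H)) ((n : H)) : ℂ) = inner ℂ (Tp n) n := by
    intro n hn
    rw [← hkey, ← hsub, ContinuousLinearMap.sub_apply, (by exact hn : Tm n = 0), sub_zero]
  have hformP : ∀ v : M, v ∈ Nᗮ → (inner ℂ (A (v : H)) ((v : H)) : ℂ) = -inner ℂ (Tm v) v := by
    intro v hv
    rw [← hkey, ← hsub, ContinuousLinearMap.sub_apply, hperp v hv, zero_sub, inner_neg_left]
  refine ⟨Bp, Bm, by rw [hBmdef]; abel, ?_, ?_, ?_, ?_, ?_, ?_, ?_⟩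
  · -- range Bp closed
    have hr : Set.range ⇑Bp = ((↑) : M → H) '' (N : Set M) := by
      apply Set.Subset.antisymm
      · rintro _ ⟨x, rfl⟩
        exact ⟨Q (B' x), hQmemN _, (hBp x).symm⟩
      · rintro _ ⟨n, hn, rfl⟩
        obtain ⟨x, hx⟩ := hB'surj n
        refine ⟨x, ?_⟩
        rw [hBp, hx, hQfix n hn]
    rw [hr]
    exact hMclosed.isClosedMap_subtype_val _ hNclosed
  · -- range Bm closed
    have hr : Set.range ⇑Bm = ((↑) : M → H) '' ((Nᗮ : Submodule ℂ M) : Set M) := by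
      apply Set.Subset.antisymm
      · rintro _ ⟨x, rfl⟩
        exact ⟨B' x - Q (B' x), hQperp _, (hBm x).symm⟩
      · rintro _ ⟨v, hv, rfl⟩
        obtain ⟨x, hx⟩ := hB'surj v
        refine ⟨x, ?_⟩
        rw [hBm, hx, hQzero v hv, sub_zero]
    rw [hr]
    exact hMclosed.isClosedMap_subtype_val _ (Submodule.isClosed_orthogonal N)
  · -- nonnegativity on range Bp
    intro x
    rw [hBp]
    have := hTppos.inner_nonneg_left (Q (B' x))
    rw [hformN _ (hQmemN (B' x))]
    simpa using (Complex.nonneg_iff.mp this).1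
  · -- nonpositivity on range Bm
    intro x
    rw [hBm]
    have := hTmpos.inner_nonneg_left (B' x - Q (B' x))
    rw [hformP _ (hQperp (B' x))]
    simp only [Complex.neg_re, neg_nonpos]
    exact (Complex.nonneg_iff.mp this).1
  · -- orthogonality
    intro x y
    rw [hBp, hBm, ← Submodule.coe_inner]
    exact (Submodule.mem_orthogonal _ _).mp (hQperp (B' y)) _ (hQmemN (B' x))
  · -- W-orthogonality
    intro x y
    rw [hBp, hBm, ← hkey, ← hsub,
      ContinuousLinearMap.sub_apply, (by exact hQmemN (B' x) : Tm (Q (B' x)) = 0), sub_zero,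
      hTpsym, hperp _ (hQperp (B' y)), inner_zero_right]
  · -- range decomposition
    apply le_antisymm
    · intro z hz
      obtain ⟨x, hx⟩ := hB'surj ⟨z, hz⟩
      have hz' : z = Bp x + Bm x := by
        have h0 : (B' x : H) = z := congrArg _ hx
        rw [← h0]
        show (B x : H) = Bp x + Bm x
        rw [hBmdef]
        simp
      rw [hz']
      exact Submodule.add_mem_sup ⟨x, rfl⟩ ⟨x, rfl⟩
    · refine sup_le ?_ ?_ <;> rintro z ⟨x, rfl⟩
      · have h := (Q (B' x)).2
        rwa [← hBp x] at h
      · have h := (B' x - Q (B' x)).2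
        rwa [← hBm x] at h
end

section
/- Let W be a Krein-selfadjoint operator on H, B ∈ L(H) with closed range and C ∈ L(H). Then there exist Z₁, Z₂ ∈ L(H) with B^# W (BZ₁ − C) = 0 and (BZ₂)^# W (BZ₂) = 0 (equivalently, there exists an indefinite min-max solution of BX − C = 0 with weight W) if and only if range(C) ⊆ range(B) + W⁻¹(range(B)^[⊥]). -/
open ContinuousLinearMap Filter Topology

/-- Douglas-type lemma: pointwise range inclusion gives a bounded solution. -/
lemma douglas {H : Type*} [NormedAddCommGroup H] [InnerProductSpace ℂ H] [CompleteSpace H]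
    (A D : H →L[ℂ] H) (h : ∀ x, D x ∈ LinearMap.range (A : H →ₗ[ℂ] H)) :
    ∃ Z : H →L[ℂ] H, A ∘L Z = D := by
  set K : Submodule ℂ H := LinearMap.ker (A : H →ₗ[ℂ] H) with hK
  haveI : CompleteSpace K := A.isClosed_ker.completeSpace_coe
  set N : Submodule ℂ H := Kᗮ with hN
  set A' : N →ₗ[ℂ] H := A.toLinearMap ∘ₗ N.subtype with hA'
  have hinj : Function.Injective A' := by
    intro n m hnm
    have hsub : (n : H) - (m : H) ∈ K := by
      simp only [hK, LinearMap.mem_ker, map_sub]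
      simpa [hA', sub_eq_zero] using hnm
    have hsub' : (n : H) - (m : H) ∈ N := N.sub_mem n.2 m.2
    have : (n : H) - (m : H) = 0 :=
      (Submodule.mem_bot ℂ).mp (K.orthogonal_disjoint.le_bot ⟨hsub, hsub'⟩)
    exact Subtype.ext (sub_eq_zero.mp this)
  have hrange : ∀ x, D x ∈ LinearMap.range A' := by
    intro x
    obtain ⟨w, hw⟩ := h x
    refine ⟨⟨w - K.orthogonalProjection w, Submodule.sub_starProjection_mem_orthogonal (K := K) w⟩, ?_⟩
    have hker : A (K.starProjection w) = 0 := (K.orthogonalProjection w).2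
    simp [hA', map_sub, hker, hw]
    exact hw
  let e := LinearEquiv.ofInjective A' hinj
  let D' : H →ₗ[ℂ] ↥(LinearMap.range A') := (D : H →ₗ[ℂ] H).codRestrict _ hrange
  let Zl : H →ₗ[ℂ] H := N.subtype ∘ₗ (e.symm.toLinearMap ∘ₗ D')
  have memN : ∀ x, Zl x ∈ N := fun x => (e.symm (D' x)).2
  have key : ∀ x, A (Zl x) = D x := by
    intro x
    have h0 : A' (e.symm (D' x)) = ((e (e.symm (D' x)) : ↥(LinearMap.range A')) : H) := rfl
    rw [e.apply_symm_apply] at h0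
    simpa [Zl, hA', D'] using h0
  have hseq : ∀ (u : ℕ → H) (x y), Tendsto u atTop (𝓝 x) → Tendsto (Zl ∘ u) atTop (𝓝 y) →
      y = Zl x := by
    intro u x y hux hZy
    have h1 : A y = D x := by
      have t1 : Tendsto (fun n => A (Zl (u n))) atTop (𝓝 (A y)) :=
        (A.continuous.tendsto y).comp hZy
      have t3 : Tendsto (fun n => D (u n)) atTop (𝓝 (D x)) :=
        (D.continuous.tendsto x).comp hux
      refine tendsto_nhds_unique ?_ t3
      simpa only [key] using t1
    have h2 : y ∈ N := by
      have hcl : IsClosed (N : Set H) := K.isClosed_orthogonal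
      exact hcl.mem_of_tendsto hZy (Filter.Eventually.of_forall fun n => memN (u n))
    have h3 : y - Zl x ∈ K := by
      simp only [hK, LinearMap.mem_ker, map_sub, ContinuousLinearMap.coe_coe, h1, key x, sub_self]
    have h4 : y - Zl x ∈ N := N.sub_mem h2 (memN x)
    have : y - Zl x = 0 :=
      (Submodule.mem_bot ℂ).mp (K.orthogonal_disjoint.le_bot ⟨h3, h4⟩)
    exact sub_eq_zero.mp this
  refine ⟨ContinuousLinearMap.ofSeqClosedGraph hseq, ?_⟩
  ext x
  simpa using key x

/-- there exist `Z₁, Z₂` with `B^# W (BZ₁ − C) = 0` and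
`(BZ₂)^# W (BZ₂) = 0` iff `range C ⊆ range B + W⁻¹(range B^[⊥])`. -/
theorem stmt11 {H : Type*} [NormedAddCommGroup H] [InnerProductSpace ℂ H] [CompleteSpace H]
    (J : H →L[ℂ] H) (hJ : IsSelfAdjoint J) (hJ2 : J ∘L J = 1)
    (W : H →L[ℂ] H) (hW : kadj J W = W)
    (B : H →L[ℂ] H) (hB : IsClosed (Set.range ⇑B)) (C : H →L[ℂ] H) :
    (∃ Z₁ Z₂ : H →L[ℂ] H,
      kadj J B ∘L (W ∘L (B ∘L Z₁ - C)) = 0 ∧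
      kadj J (B ∘L Z₂) ∘L (W ∘L (B ∘L Z₂)) = 0) ↔
    (∀ x : H, ∃ u v : H, C x = B u + v ∧
      ∀ y : H, (inner ℂ (J (W v)) (B y) : ℂ) = 0) := by
  constructor
  · rintro ⟨Z₁, Z₂, h1, h2⟩ x
    refine ⟨Z₁ x, C x - B (Z₁ x), by abel, fun y => ?_⟩
    have hx := congrFun (congrArg (fun (f : H →L[ℂ] H) => (f : H → H)) h1) x
    simp only [kadj, comp_apply, sub_apply, zero_apply] at hx
    -- hx : J (adjoint B (J (W (B (Z₁ x) - C x)))) = 0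
    have hx' : adjoint B (J (W (B (Z₁ x) - C x))) = 0 := by
      have := congrArg (fun z => J z) hx
      simpa [← comp_apply J J, hJ2] using this
    have hBadj : adjoint B (J (W (C x - B (Z₁ x)))) = 0 := by
      rw [show C x - B (Z₁ x) = -(B (Z₁ x) - C x) by abel]
      simp only [map_neg, hx', neg_zero]
    calc (inner ℂ (J (W (C x - B (Z₁ x)))) (B y) : ℂ)
        = inner ℂ (adjoint B (J (W (C x - B (Z₁ x))))) y := (adjoint_inner_left B _ _).symm
      _ = 0 := by rw [hBadj]; exact inner_zero_left _
  · intro h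
    set T : H →L[ℂ] H := adjoint B ∘L (J ∘L W) with hT
    have hrange : ∀ x, (T ∘L C) x ∈ LinearMap.range ((T ∘L B : H →L[ℂ] H) : H →ₗ[ℂ] H) := by
      intro x
      obtain ⟨u, v, hc, hv⟩ := h x
      have hTv : T v = 0 := by
        have : ∀ y, (inner ℂ (adjoint B (J (W v))) y : ℂ) = 0 := by
          intro y
          rw [adjoint_inner_left]
          exact hv y
        have := inner_self_eq_zero.mp (this (adjoint B (J (W v))))
        simpa [hT] using this
      refine ⟨u, ?_⟩
      simp only [comp_apply, hc, map_add]
      simpa [comp_apply] using (by simpa [comp_apply] using hTv : T v = 0)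
    obtain ⟨Z₁, hZ₁⟩ := douglas (T ∘L B) (T ∘L C) hrange
    refine ⟨Z₁, 0, ?_, ?_⟩
    · ext x
      have hx : (T ∘L B) (Z₁ x) = (T ∘L C) x :=
        congrFun (congrArg (fun (f : H →L[ℂ] H) => (f : H → H)) hZ₁) x
      simp only [hT, comp_apply] at hx
      simp [kadj, map_sub, hx]
    · simp [kadj]
end

section
/- Let W be a Krein-selfadjoint operator on H, B ∈ L(H) with closed range decomposed as B = B₊ + B₋ as in the context, and suppose W is range(B)-complementable, witnessed by a projection Q ∈ L(H) with range(Q) = range(B) and W ∘ Q = Q^# ∘ W. Then for every C ∈ L(H): (a) for each Y ∈ L(H) the family {F_J(X,Y) : X ∈ L(H)} has a greatest lower bound G(Y) in the Krein order, and the set {G(Y) : Y ∈ L(H)} has a maximum element equal to C^# ∘ W(I−Q) ∘ C; (b) for each X ∈ L(H) the family {F_J(X,Y) : Y ∈ L(H)} has a least upper bound H(X) in the Krein order, and the set {H(X) : X ∈ L(H)} has a minimum element equal to C^# ∘ W(I−Q) ∘ C. In particular the max-min equals the min-max. -/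
open ContinuousLinearMap

/-- `F_J(X,Y) = (B₊X + B₋Y − C)^# ∘ W ∘ (B₊X + B₋Y − C)`. -/
noncomputable def FJ {H : Type*} [NormedAddCommGroup H] [InnerProductSpace ℂ H]
    [CompleteSpace H] (J W Bp Bm C : H →L[ℂ] H) (X Y : H →L[ℂ] H) : H →L[ℂ] H :=
  kadj J (Bp ∘L X + Bm ∘L Y - C) ∘L (W ∘L (Bp ∘L X + Bm ∘L Y - C))

section Helpers

variable {H : Type*} [NormedAddCommGroup H] [InnerProductSpace ℂ H] [CompleteSpace H]
variable (J : H →L[ℂ] H)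

theorem aux_hJ2' (hJ2 : J ∘L J = 1) : ∀ v : H, J (J v) = v := by
  intro v
  have := congrFun (congrArg (fun f : H →L[ℂ] H => (f : H → H)) hJ2) v
  simpa using this

theorem aux_kadj_apply (T : H →L[ℂ] H) (x : H) : kadj J T x = J (adjoint T (J x)) := rfl

theorem aux_kadj_add (A B : H →L[ℂ] H) : kadj J (A + B) = kadj J A + kadj J B := by
  ext x; simp [aux_kadj_apply]

theorem aux_kadj_comp (hJ2 : J ∘L J = 1) (A B : H →L[ℂ] H) :
    kadj J (A ∘L B) = kadj J B ∘L kadj J A := by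
  ext x; simp [aux_kadj_apply, adjoint_comp, aux_hJ2' J hJ2]

theorem aux_JW_sa (hJ : IsSelfAdjoint J) (hJ2 : J ∘L J = 1) (W : H →L[ℂ] H)
    (hW : kadj J W = W) : IsSelfAdjoint (J ∘L W) := by
  rw [ContinuousLinearMap.isSelfAdjoint_iff']
  ext x
  have hWx : ∀ v, J (adjoint W (J v)) = W v := fun v => by
    simpa [aux_kadj_apply] using ContinuousLinearMap.ext_iff.mp hW v
  have h1 : adjoint W (J x) = J (W x) := by
    have := hWx x
    calc adjoint W (J x) = J (J (adjoint W (J x))) := (aux_hJ2' J hJ2 _).symm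
    _ = J (W x) := by rw [this]
  simp [adjoint_comp, hJ.adjoint_eq, h1]

theorem aux_cross_zero (W S T : H →L[ℂ] H)
    (h : ∀ x y, (inner ℂ ((J ∘L W) (S x)) (T y) : ℂ) = 0) :
    kadj J T ∘L (W ∘L S) = 0 := by
  ext x
  have h0 : adjoint T ((J ∘L W) (S x)) = 0 := by
    apply ext_inner_right ℂ
    intro y
    rw [adjoint_inner_left]
    simpa using h x y
  simp only [ContinuousLinearMap.comp_apply, aux_kadj_apply, zero_apply]
  have : J (W (S x)) = (J ∘L W) (S x) := rfl
  rw [this, h0, map_zero]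

theorem aux_cross_zero' (hJ : IsSelfAdjoint J) (hJ2 : J ∘L J = 1) (W S T : H →L[ℂ] H)
    (hW : kadj J W = W)
    (h : ∀ x y, (inner ℂ ((J ∘L W) (S x)) (T y) : ℂ) = 0) :
    kadj J S ∘L (W ∘L T) = 0 := by
  apply aux_cross_zero
  intro x y
  have hsa := (aux_JW_sa J hJ hJ2 W hW).isSymmetric
  have h2 := hsa (T x) (S y)
  simp only [ContinuousLinearMap.coe_coe] at h2
  rw [h2, ← inner_conj_symm, h y x, map_zero]

theorem aux_JPhi_eq (hJ2 : J ∘L J = 1) (W A : H →L[ℂ] H) :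
    J ∘L (kadj J A ∘L (W ∘L A)) = adjoint A ∘L ((J ∘L W) ∘L A) := by
  ext x; simp [aux_kadj_apply, aux_hJ2' J hJ2]

theorem aux_phi_pos (hJ : IsSelfAdjoint J) (hJ2 : J ∘L J = 1) (W A : H →L[ℂ] H)
    (hW : kadj J W = W)
    (hpos : ∀ x, 0 ≤ (inner ℂ ((J ∘L W) (A x)) (A x) : ℂ).re) :
    (J ∘L (kadj J A ∘L (W ∘L A))).IsPositive := by
  rw [aux_JPhi_eq J hJ2]
  constructor
  · exact ((aux_JW_sa J hJ hJ2 W hW).adjoint_conj A).isSymmetric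
  · intro x
    have : (adjoint A ∘L ((J ∘L W) ∘L A)).reApplyInnerSelf x
        = (inner ℂ ((J ∘L W) (A x)) (A x) : ℂ).re := by
      simp [reApplyInnerSelf, ContinuousLinearMap.comp_apply, adjoint_inner_left]
    rw [this]; exact hpos x

theorem aux_phi_neg (hJ : IsSelfAdjoint J) (hJ2 : J ∘L J = 1) (W A : H →L[ℂ] H)
    (hW : kadj J W = W)
    (hneg : ∀ x, (inner ℂ ((J ∘L W) (A x)) (A x) : ℂ).re ≤ 0) :
    (J ∘L (-(kadj J A ∘L (W ∘L A)))).IsPositive := by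
  rw [comp_neg, aux_JPhi_eq J hJ2]
  constructor
  · exact ((aux_JW_sa J hJ hJ2 W hW).adjoint_conj A).neg.isSymmetric
  · intro x
    have : (-(adjoint A ∘L ((J ∘L W) ∘L A))).reApplyInnerSelf x
        = -(inner ℂ ((J ∘L W) (A x)) (A x) : ℂ).re := by
      simp [reApplyInnerSelf, ContinuousLinearMap.comp_apply, adjoint_inner_left]
    rw [this]; linarith [hneg x]

theorem aux_douglas (T A : H →L[ℂ] H) (hT : IsClosed (Set.range ⇑T))
    (hA : ∀ x, A x ∈ LinearMap.range (T : H →ₗ[ℂ] H)) : ∃ X : H →L[ℂ] H, T ∘L X = A := by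
  set R : Submodule ℂ H := LinearMap.range (T : H →ₗ[ℂ] H) with hR
  have hRclosed : IsClosed (R : Set H) := by
    simpa [hR, LinearMap.coe_range] using hT
  haveI : CompleteSpace R := hRclosed.completeSpace_coe
  set K : Submodule ℂ H := (LinearMap.ker (T : H →ₗ[ℂ] H))ᗮ with hK
  haveI : CompleteSpace K := (Submodule.isClosed_orthogonal _).completeSpace_coe
  haveI : CompleteSpace (LinearMap.ker (T : H →ₗ[ℂ] H)) :=
    (ContinuousLinearMap.isClosed_ker T).completeSpace_coe
  set f : K →L[ℂ] R := (T ∘L K.subtypeL).codRestrict R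
    (fun x => LinearMap.mem_range_self _ _) with hf
  have hinj : f.ker = ⊥ := by
    rw [Submodule.eq_bot_iff]
    rintro ⟨x, hxK⟩ hx
    have hx0 : T x = 0 := by
      have := congrArg (Subtype.val) hx
      exact this
    have : x ∈ LinearMap.ker (T : H →ₗ[ℂ] H) ⊓ (LinearMap.ker (T : H →ₗ[ℂ] H))ᗮ := ⟨hx0, hxK⟩
    rw [Submodule.inf_orthogonal_eq_bot] at this
    simpa using this
  have hsurj : f.range = ⊤ := by
    rw [Submodule.eq_top_iff']
    rintro ⟨y, hy⟩
    obtain ⟨x, rfl⟩ := hy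
    obtain ⟨a, ha, b, hb, hab⟩ := (LinearMap.ker (T : H →ₗ[ℂ] H)).exists_add_mem_mem_orthogonal x
    refine ⟨⟨b, hb⟩, ?_⟩
    apply Subtype.ext
    have : T a = 0 := ha
    simp [hf, hab, this]
    rfl
  set e := ContinuousLinearEquiv.ofBijective f hinj hsurj with he
  refine ⟨K.subtypeL ∘L ((e.symm : R →L[ℂ] K) ∘L A.codRestrict R hA), ?_⟩
  ext x
  have h1 : ∀ k : K, T (k : H) = (f k : H) := fun k => rfl
  simp only [ContinuousLinearMap.comp_apply, Submodule.subtypeL_apply]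
  rw [h1]
  have : f ((e.symm : R →L[ℂ] K) (A.codRestrict R hA x)) = A.codRestrict R hA x := by
    have := e.apply_symm_apply (A.codRestrict R hA x)
    simpa [he, ContinuousLinearEquiv.coe_ofBijective] using this
  rw [this]
  rfl

end Helpers

/-- if `W` is `range B`-complementable, witnessed by the projection `Q`,
then for every `C` the max-min and the min-max of `F_J(X,Y)` exist and both equal
`C^# ∘ W(I−Q) ∘ C`. -/
theorem stmt12 {H : Type*} [NormedAddCommGroup H] [InnerProductSpace ℂ H] [CompleteSpace H]
    (J : H →L[ℂ] H) (hJ : IsSelfAdjoint J) (hJ2 : J ∘L J = 1)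
    (W : H →L[ℂ] H) (hW : kadj J W = W)
    (B Bp Bm : H →L[ℂ] H) (hB : IsClosed (Set.range ⇑B))
    (hBsum : B = Bp + Bm)
    (hBp : IsClosed (Set.range ⇑Bp)) (hBm : IsClosed (Set.range ⇑Bm))
    (hBppos : ∀ x : H, 0 ≤ (inner ℂ ((J ∘L W) (Bp x)) (Bp x) : ℂ).re)
    (hBmneg : ∀ x : H, (inner ℂ ((J ∘L W) (Bm x)) (Bm x) : ℂ).re ≤ 0)
    (horth : ∀ x y : H, (inner ℂ (Bp x) (Bm y) : ℂ) = 0)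
    (hWorth : ∀ x y : H, (inner ℂ ((J ∘L W) (Bp x)) (Bm y) : ℂ) = 0)
    (hran : LinearMap.range (B : H →ₗ[ℂ] H) = LinearMap.range (Bp : H →ₗ[ℂ] H) ⊔ LinearMap.range (Bm : H →ₗ[ℂ] H))
    (Q : H →L[ℂ] H) (hQ : Q ∘L Q = Q)
    (hQran : LinearMap.range (Q : H →ₗ[ℂ] H) = LinearMap.range (B : H →ₗ[ℂ] H))
    (hWQ : W ∘L Q = kadj J Q ∘L W) :
    ∀ C : H →L[ℂ] H,
      (∃ G : (H →L[ℂ] H) → (H →L[ℂ] H),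
        (∀ Y : H →L[ℂ] H,
          (∀ X : H →L[ℂ] H, kLE J (G Y) (FJ J W Bp Bm C X Y)) ∧
          (∀ T : H →L[ℂ] H,
            (∀ X : H →L[ℂ] H, kLE J T (FJ J W Bp Bm C X Y)) → kLE J T (G Y))) ∧
        (∃ Y₀ : H →L[ℂ] H, G Y₀ = kadj J C ∘L ((W ∘L (1 - Q)) ∘L C)) ∧
        (∀ Y : H →L[ℂ] H, kLE J (G Y) (kadj J C ∘L ((W ∘L (1 - Q)) ∘L C)))) ∧
      (∃ M : (H →L[ℂ] H) → (H →L[ℂ] H),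
        (∀ X : H →L[ℂ] H,
          (∀ Y : H →L[ℂ] H, kLE J (FJ J W Bp Bm C X Y) (M X)) ∧
          (∀ T : H →L[ℂ] H,
            (∀ Y : H →L[ℂ] H, kLE J (FJ J W Bp Bm C X Y) T) → kLE J (M X) T)) ∧
        (∃ X₀ : H →L[ℂ] H, M X₀ = kadj J C ∘L ((W ∘L (1 - Q)) ∘L C)) ∧
        (∀ X : H →L[ℂ] H, kLE J (kadj J C ∘L ((W ∘L (1 - Q)) ∘L C)) (M X))) := by
  intro C
  -- pointwise facts
  have hQpt : ∀ u : H, Q (Q u) = Q u := fun u => by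
    simpa using ContinuousLinearMap.ext_iff.mp hQ u
  have hQfix : ∀ v ∈ LinearMap.range (Q : H →ₗ[ℂ] H), Q v = v := by
    rintro v ⟨u, rfl⟩; exact hQpt u
  have hWQpt : ∀ u : H, adjoint Q (J (W u)) = J (W (Q u)) := by
    intro u
    have h1 : W (Q u) = J (adjoint Q (J (W u))) := by
      simpa [aux_kadj_apply] using ContinuousLinearMap.ext_iff.mp hWQ u
    rw [h1, aux_hJ2' J hJ2]
  have hle_p : LinearMap.range (Bp : H →ₗ[ℂ] H) ≤ LinearMap.range (Q : H →ₗ[ℂ] H) := by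
    rw [hQran, hran]; exact le_sup_left
  have hle_m : LinearMap.range (Bm : H →ₗ[ℂ] H) ≤ LinearMap.range (Q : H →ₗ[ℂ] H) := by
    rw [hQran, hran]; exact le_sup_right
  -- the projection decomposition of Q C
  set Sp : Submodule ℂ H := LinearMap.range (Bp : H →ₗ[ℂ] H) with hSp
  have hSpclosed : IsClosed (Sp : Set H) := by
    simpa [hSp, LinearMap.coe_range] using hBp
  haveI : CompleteSpace Sp := hSpclosed.completeSpace_coe
  set Cp : H →L[ℂ] H := Sp.subtypeL ∘L ((Sp.orthogonalProjectionOnto : H →L[ℂ] Sp) ∘L (Q ∘L C))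
    with hCpdef
  set Cm : H →L[ℂ] H := Q ∘L C - Cp with hCmdef
  have hCpmem : ∀ x, Cp x ∈ LinearMap.range (Bp : H →ₗ[ℂ] H) := fun x => by
    exact (Sp.orthogonalProjectionOnto (Q (C x))).2
  have hCmmem : ∀ x, Cm x ∈ LinearMap.range (Bm : H →ₗ[ℂ] H) := by
    intro x
    have hx : Q (C x) ∈ LinearMap.range (Q : H →ₗ[ℂ] H) := LinearMap.mem_range_self _ _
    rw [hQran, hran] at hx
    obtain ⟨p, hp, m, hm, hpm⟩ := Submodule.mem_sup.mp hx
    have hmo : m ∈ Spᗮ := by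
      rw [Submodule.mem_orthogonal]
      rintro u ⟨a, rfl⟩
      obtain ⟨b, rfl⟩ := hm
      exact horth a b
    have hproj : (Sp.orthogonalProjectionOnto (Q (C x)) : H) = p := by
      rw [← hpm, map_add, Submodule.orthogonalProjectionOnto_mem_subspace_eq_self ⟨p, hp⟩,
        Submodule.orthogonalProjectionOnto_apply_of_mem_orthogonal hmo]
      simp
    have : Cm x = m := by
      rw [hCmdef, hCpdef]
      simp only [ContinuousLinearMap.sub_apply, ContinuousLinearMap.comp_apply,
        Submodule.subtypeL_apply]
      rw [hproj, ← hpm]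
      abel
    rw [this]; exact hm
  -- Douglas lifts
  obtain ⟨X₀, hX₀⟩ := aux_douglas Bp Cp hBp hCpmem
  obtain ⟨Y₀, hY₀⟩ := aux_douglas Bm Cm hBm hCmmem
  -- notation
  set K₀ : H →L[ℂ] H := kadj J C ∘L ((W ∘L (1 - Q)) ∘L C) with hK₀
  set N : H →L[ℂ] H := Q ∘L C - C with hN
  -- membership for Ap, Am
  have hApmem : ∀ (X : H →L[ℂ] H) x, (Bp ∘L X - Cp) x ∈ LinearMap.range (Bp : H →ₗ[ℂ] H) := by
    intro X x
    simp only [ContinuousLinearMap.sub_apply, ContinuousLinearMap.comp_apply]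
    exact sub_mem (LinearMap.mem_range_self _ _) (hCpmem x)
  have hAmmem : ∀ (Y : H →L[ℂ] H) x, (Bm ∘L Y - Cm) x ∈ LinearMap.range (Bm : H →ₗ[ℂ] H) := by
    intro Y x
    simp only [ContinuousLinearMap.sub_apply, ContinuousLinearMap.comp_apply]
    exact sub_mem (LinearMap.mem_range_self _ _) (hCmmem x)
  have hWorth' : ∀ u v : H, u ∈ LinearMap.range (Bp : H →ₗ[ℂ] H) → v ∈ LinearMap.range (Bm : H →ₗ[ℂ] H) →
      (inner ℂ ((J ∘L W) u) v : ℂ) = 0 := by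
    rintro u v ⟨a, rfl⟩ ⟨b, rfl⟩; exact hWorth a b
  have hNorth : ∀ (x : H) (v : H), v ∈ LinearMap.range (Q : H →ₗ[ℂ] H) →
      (inner ℂ ((J ∘L W) (N x)) v : ℂ) = 0 := by
    intro x v hv
    have h1 : (J ∘L W) (N x) = J (W (Q (C x))) - J (W (C x)) := by
      simp [hN, map_sub]
    rw [h1, inner_sub_left, ← hWQpt, adjoint_inner_left, hQfix v hv]
    have : (J ∘L W) (C x) = J (W (C x)) := rfl
    rw [sub_eq_zero]
  -- cross terms
  have hz1 : ∀ (X Y : H →L[ℂ] H),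
      kadj J (Bm ∘L Y - Cm) ∘L (W ∘L (Bp ∘L X - Cp)) = 0 := by
    intro X Y
    exact aux_cross_zero J W _ _ (fun x y => hWorth' _ _ (hApmem X x) (hAmmem Y y))
  have hz2 : ∀ (X Y : H →L[ℂ] H),
      kadj J (Bp ∘L X - Cp) ∘L (W ∘L (Bm ∘L Y - Cm)) = 0 := by
    intro X Y
    exact aux_cross_zero' J hJ hJ2 W _ _ hW
      (fun x y => hWorth' _ _ (hApmem X x) (hAmmem Y y))
  have hz3 : ∀ (X : H →L[ℂ] H), kadj J (Bp ∘L X - Cp) ∘L (W ∘L N) = 0 := by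
    intro X
    exact aux_cross_zero J W _ _ (fun x y => hNorth x _ (hle_p (hApmem X y)))
  have hz4 : ∀ (X : H →L[ℂ] H), kadj J N ∘L (W ∘L (Bp ∘L X - Cp)) = 0 := by
    intro X
    exact aux_cross_zero' J hJ hJ2 W _ _ hW
      (fun x y => hNorth x _ (hle_p (hApmem X y)))
  have hz5 : ∀ (Y : H →L[ℂ] H), kadj J (Bm ∘L Y - Cm) ∘L (W ∘L N) = 0 := by
    intro Y
    exact aux_cross_zero J W _ _ (fun x y => hNorth x _ (hle_m (hAmmem Y y)))
  have hz6 : ∀ (Y : H →L[ℂ] H), kadj J N ∘L (W ∘L (Bm ∘L Y - Cm)) = 0 := by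
    intro Y
    exact aux_cross_zero' J hJ hJ2 W _ _ hW
      (fun x y => hNorth x _ (hle_m (hAmmem Y y)))
  -- Φ(N) = K₀
  have hPhiN : kadj J N ∘L (W ∘L N) = K₀ := by
    ext x
    simp only [hN, hK₀, aux_kadj_apply, ContinuousLinearMap.comp_apply,
      ContinuousLinearMap.sub_apply, ContinuousLinearMap.one_apply, map_sub,
      adjoint_comp, ContinuousLinearMap.coe_comp', Function.comp_apply]
    rw [hWQpt]
    simp only [map_sub, hQpt]
    abel_nf
    rw [hWQpt]
  -- decomposition of the sum
  have hD : ∀ X Y : H →L[ℂ] H,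
      Bp ∘L X + Bm ∘L Y - C = (Bp ∘L X - Cp) + (Bm ∘L Y - Cm) + N := by
    intro X Y
    rw [hCmdef, hN]
    abel
  -- main decomposition
  have hdec : ∀ X Y : H →L[ℂ] H, FJ J W Bp Bm C X Y =
      kadj J (Bp ∘L X - Cp) ∘L (W ∘L (Bp ∘L X - Cp))
      + kadj J (Bm ∘L Y - Cm) ∘L (W ∘L (Bm ∘L Y - Cm)) + K₀ := by
    intro X Y
    have : FJ J W Bp Bm C X Y =
        kadj J ((Bp ∘L X - Cp) + (Bm ∘L Y - Cm) + N)
          ∘L (W ∘L ((Bp ∘L X - Cp) + (Bm ∘L Y - Cm) + N)) := by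
      rw [FJ, hD X Y]
    rw [this, aux_kadj_add, aux_kadj_add]
    simp only [comp_add, add_comp]
    rw [hz1 X Y, hz2 X Y, hz3 X, hz4 X, hz5 Y, hz6 Y, hPhiN]
    abel
  have hphi0 : (kadj J (0 : H →L[ℂ] H) ∘L (W ∘L (0 : H →L[ℂ] H))) = 0 := by
    simp
  have hApX₀ : Bp ∘L X₀ - Cp = 0 := by rw [hX₀]; exact sub_self _
  have hAmY₀ : Bm ∘L Y₀ - Cm = 0 := by rw [hY₀]; exact sub_self _
  have hposAp : ∀ (X : H →L[ℂ] H) x,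
      0 ≤ (inner ℂ ((J ∘L W) ((Bp ∘L X - Cp) x)) ((Bp ∘L X - Cp) x) : ℂ).re := by
    intro X x
    obtain ⟨u, hu⟩ := hApmem X x
    rw [← hu]; exact hBppos u
  have hnegAm : ∀ (Y : H →L[ℂ] H) x,
      (inner ℂ ((J ∘L W) ((Bm ∘L Y - Cm) x)) ((Bm ∘L Y - Cm) x) : ℂ).re ≤ 0 := by
    intro Y x
    obtain ⟨u, hu⟩ := hAmmem Y x
    rw [← hu]; exact hBmneg u
  constructor
  · -- part (a)
    refine ⟨fun Y => kadj J (Bm ∘L Y - Cm) ∘L (W ∘L (Bm ∘L Y - Cm)) + K₀, ?_, ⟨Y₀, ?_⟩, ?_⟩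
    · intro Y
      constructor
      · intro X
        show (J ∘L (FJ J W Bp Bm C X Y -
          (kadj J (Bm ∘L Y - Cm) ∘L (W ∘L (Bm ∘L Y - Cm)) + K₀))).IsPositive
        have heq : FJ J W Bp Bm C X Y -
            (kadj J (Bm ∘L Y - Cm) ∘L (W ∘L (Bm ∘L Y - Cm)) + K₀)
            = kadj J (Bp ∘L X - Cp) ∘L (W ∘L (Bp ∘L X - Cp)) := by
          rw [hdec X Y]; abel
        rw [heq]
        exact aux_phi_pos J hJ hJ2 W _ hW (hposAp X)
      · intro T hT
        have h1 := hT X₀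
        show (J ∘L ((kadj J (Bm ∘L Y - Cm) ∘L (W ∘L (Bm ∘L Y - Cm)) + K₀) - T)).IsPositive
        have h2 : FJ J W Bp Bm C X₀ Y
            = kadj J (Bm ∘L Y - Cm) ∘L (W ∘L (Bm ∘L Y - Cm)) + K₀ := by
          rw [hdec X₀ Y, hApX₀, hphi0, zero_add]
        rw [← h2]; exact h1
    · show kadj J (Bm ∘L Y₀ - Cm) ∘L (W ∘L (Bm ∘L Y₀ - Cm)) + K₀ = K₀
      rw [hAmY₀, hphi0, zero_add]
    · intro Y
      show (J ∘L (K₀ - (kadj J (Bm ∘L Y - Cm) ∘L (W ∘L (Bm ∘L Y - Cm)) + K₀))).IsPositive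
      have heq : K₀ - (kadj J (Bm ∘L Y - Cm) ∘L (W ∘L (Bm ∘L Y - Cm)) + K₀)
          = -(kadj J (Bm ∘L Y - Cm) ∘L (W ∘L (Bm ∘L Y - Cm))) := by abel
      rw [heq]
      exact aux_phi_neg J hJ hJ2 W _ hW (hnegAm Y)
  · -- part (b)
    refine ⟨fun X => kadj J (Bp ∘L X - Cp) ∘L (W ∘L (Bp ∘L X - Cp)) + K₀, ?_, ⟨X₀, ?_⟩, ?_⟩
    · intro X
      constructor
      · intro Y
        show (J ∘L ((kadj J (Bp ∘L X - Cp) ∘L (W ∘L (Bp ∘L X - Cp)) + K₀)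
          - FJ J W Bp Bm C X Y)).IsPositive
        have heq : (kadj J (Bp ∘L X - Cp) ∘L (W ∘L (Bp ∘L X - Cp)) + K₀)
            - FJ J W Bp Bm C X Y
            = -(kadj J (Bm ∘L Y - Cm) ∘L (W ∘L (Bm ∘L Y - Cm))) := by
          rw [hdec X Y]; abel
        rw [heq]
        exact aux_phi_neg J hJ hJ2 W _ hW (hnegAm Y)
      · intro T hT
        have h1 := hT Y₀
        show (J ∘L (T - (kadj J (Bp ∘L X - Cp) ∘L (W ∘L (Bp ∘L X - Cp)) + K₀))).IsPositive
        have h2 : FJ J W Bp Bm C X Y₀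
            = kadj J (Bp ∘L X - Cp) ∘L (W ∘L (Bp ∘L X - Cp)) + K₀ := by
          rw [hdec X Y₀, hAmY₀, hphi0, add_zero]
        rw [← h2]; exact h1
    · show kadj J (Bp ∘L X₀ - Cp) ∘L (W ∘L (Bp ∘L X₀ - Cp)) + K₀ = K₀
      rw [hApX₀, hphi0, zero_add]
    · intro X
      show (J ∘L ((kadj J (Bp ∘L X - Cp) ∘L (W ∘L (Bp ∘L X - Cp)) + K₀) - K₀)).IsPositive
      have heq : (kadj J (Bp ∘L X - Cp) ∘L (W ∘L (Bp ∘L X - Cp)) + K₀) - K₀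
          = kadj J (Bp ∘L X - Cp) ∘L (W ∘L (Bp ∘L X - Cp)) := by abel
      rw [heq]
      exact aux_phi_pos J hJ hJ2 W _ hW (hposAp X)
end

section
/- Let W be a Krein-selfadjoint operator on H, B, C ∈ L(H) with B of closed range, and let Q ∈ L(H) be a projection (Q² = Q) with range(Q) = range(B) and W ∘ Q = Q^# ∘ W. If Z ∈ L(H) satisfies the normal equation B^# W (BZ − C) = 0, then (BZ − C)^# ∘ W ∘ (BZ − C) = C^# ∘ W(I − Q) ∘ C. -/
open ContinuousLinearMap

/-- if `Z` solves the normal equation `B^# W (BZ − C) = 0` and `Q` is a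
projection onto `range B` with `W ∘ Q = Q^# ∘ W`, then
`(BZ − C)^# W (BZ − C) = C^# W (I − Q) C`. -/
theorem stmt13 {H : Type*} [NormedAddCommGroup H] [InnerProductSpace ℂ H] [CompleteSpace H]
    (J : H →L[ℂ] H) (hJ : IsSelfAdjoint J) (hJ2 : J ∘L J = 1)
    (W : H →L[ℂ] H) (hW : kadj J W = W)
    (B C : H →L[ℂ] H) (hB : IsClosed (Set.range ⇑B))
    (Q : H →L[ℂ] H) (hQ : Q ∘L Q = Q)
    (hQran : LinearMap.range (Q : H →ₗ[ℂ] H) = LinearMap.range (B : H →ₗ[ℂ] H))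
    (hWQ : W ∘L Q = kadj J Q ∘L W)
    (Z : H →L[ℂ] H) (hZ : kadj J B ∘L (W ∘L (B ∘L Z - C)) = 0) :
    kadj J (B ∘L Z - C) ∘L (W ∘L (B ∘L Z - C)) =
      kadj J C ∘L ((W ∘L (1 - Q)) ∘L C) := by
  set R : H →L[ℂ] H := B ∘L Z - C with hR
  have hJJ : ∀ v : H, J (J v) = v := by
    intro v
    rw [← comp_apply, hJ2, ContinuousLinearMap.one_apply]
  have hQB : ∀ x, Q (B x) = B x := by
    intro x
    have hmem : B x ∈ LinearMap.range (Q : H →ₗ[ℂ] H) := by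
      rw [hQran]; exact LinearMap.mem_range_self (B : H →ₗ[ℂ] H) x
    obtain ⟨u, hu⟩ := hmem
    simp only [ContinuousLinearMap.coe_coe] at hu
    rw [← hu, ← comp_apply, hQ]
  have hB0 : ∀ x, adjoint B (J (W (R x))) = 0 := by
    intro x
    have h := congrArg (fun T : H →L[ℂ] H => T x) hZ
    simp only [kadj, comp_apply, zero_apply] at h
    have h2 := congrArg J h
    rwa [hJJ, map_zero] at h2
  have hQ0 : ∀ x, adjoint Q (J (W (R x))) = 0 := by
    intro x
    refine ext_inner_right ℂ (fun y => ?_)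
    have hmem : Q y ∈ LinearMap.range (B : H →ₗ[ℂ] H) := by
      rw [← hQran]; exact LinearMap.mem_range_self (Q : H →ₗ[ℂ] H) y
    obtain ⟨u, hu⟩ := hmem
    simp only [ContinuousLinearMap.coe_coe] at hu
    rw [adjoint_inner_left, ← hu, ← adjoint_inner_left, hB0, inner_zero_left,
      inner_zero_left]
  have hWQR : ∀ x, W (Q (R x)) = 0 := by
    intro x
    have h := congrArg (fun T : H →L[ℂ] H => T (R x)) hWQ
    simp only [kadj, comp_apply] at h
    rw [h, hQ0, map_zero]
  have hWBZ : ∀ x, W (B (Z x)) = W (Q (C x)) := by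
    intro x
    have h := hWQR x
    have hRx : R x = B (Z x) - C x := by simp [hR]
    rw [hRx, map_sub, map_sub, hQB] at h
    linear_combination (norm := module) h
  ext x
  have hadjR : ∀ v : H, adjoint R v = adjoint Z (adjoint B v) - adjoint C v := by
    intro v
    rw [hR, map_sub, adjoint_comp, sub_apply, comp_apply]
  simp only [kadj, comp_apply]
  rw [hadjR, hB0, map_zero, zero_sub, map_neg]
  have hRx : W (R x) = -(W ((1 - Q) (C x))) := by
    rw [hR]
    simp only [sub_apply, one_apply, comp_apply, map_sub, hWBZ x]
    abel
  rw [hRx, map_neg J, map_neg (adjoint C), map_neg J, neg_neg]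
end

section
/- Let H be a finite-dimensional complex inner product space, J ∈ L(H) a signature operator, W ∈ L(H) Krein-selfadjoint, and B, C ∈ L(H) such that range(B) is W-nonnegative. Define f : L(H) → ℝ by f(X) = re(tr((BX − C)* ∘ (J∘W) ∘ (BX − C))). Then X₀ ∈ L(H) is a global minimizer of f (i.e. f(X₀) ≤ f(X) for all X ∈ L(H)) if and only if B^# W (BX₀ − C) = 0, equivalently B* ∘ (J∘W) ∘ (B∘X₀ − C) = 0. -/
open ContinuousLinearMap

lemma trace_clm_eq_sum {H : Type*} [NormedAddCommGroup H] [InnerProductSpace ℂ H]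
    [FiniteDimensional ℂ H] (T : H →L[ℂ] H) :
    LinearMap.trace ℂ H (T : H →ₗ[ℂ] H)
      = ∑ i, (inner ℂ ((stdOrthonormalBasis ℂ H) i) (T ((stdOrthonormalBasis ℂ H) i)) : ℂ) := by
  set b := stdOrthonormalBasis ℂ H
  rw [LinearMap.trace_eq_matrix_trace ℂ b.toBasis]
  simp [Matrix.trace, LinearMap.toMatrix_apply, Matrix.diag,
    OrthonormalBasis.coe_toBasis_repr_apply, OrthonormalBasis.repr_apply_apply]

lemma phi_eq_sum {H : Type*} [NormedAddCommGroup H] [InnerProductSpace ℂ H]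
    [FiniteDimensional ℂ H] (S T : H →L[ℂ] H) :
    LinearMap.trace ℂ H ((adjoint S ∘L T : H →L[ℂ] H) : H →ₗ[ℂ] H)
      = ∑ i, (inner ℂ (S ((stdOrthonormalBasis ℂ H) i)) (T ((stdOrthonormalBasis ℂ H) i)) : ℂ) := by
  rw [trace_clm_eq_sum]
  simp [adjoint_inner_right]

set_option maxHeartbeats 1000000 in
/-- in finite dimensions, if `range B` is `W`-nonnegative, then `X₀` is a
global minimizer of `f(X) = re tr((BX−C)* (J W) (BX−C))` iff `B^# W (BX₀ − C) = 0`,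
equivalently `B* (J W) (BX₀ − C) = 0`. -/
theorem stmt15 {H : Type*} [NormedAddCommGroup H] [InnerProductSpace ℂ H]
    [FiniteDimensional ℂ H]
    (J : H →L[ℂ] H) (hJ : IsSelfAdjoint J) (hJ2 : J ∘L J = 1)
    (W : H →L[ℂ] H) (hW : J ∘L adjoint W ∘L J = W)
    (B C : H →L[ℂ] H)
    (hBpos : ∀ x : H, 0 ≤ (inner ℂ ((J ∘L W) (B x)) (B x) : ℂ).re)
    (X₀ : H →L[ℂ] H) :
    ((∀ X : H →L[ℂ] H,
        (LinearMap.trace ℂ H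
          ((adjoint (B ∘L X₀ - C) ∘L ((J ∘L W) ∘L (B ∘L X₀ - C)) : H →L[ℂ] H) :
            H →ₗ[ℂ] H)).re ≤
        (LinearMap.trace ℂ H
          ((adjoint (B ∘L X - C) ∘L ((J ∘L W) ∘L (B ∘L X - C)) : H →L[ℂ] H) :
            H →ₗ[ℂ] H)).re) ↔
      (J ∘L adjoint B ∘L J) ∘L (W ∘L (B ∘L X₀ - C)) = 0) ∧
    ((J ∘L adjoint B ∘L J) ∘L (W ∘L (B ∘L X₀ - C)) = 0 ↔
      adjoint B ∘L ((J ∘L W) ∘L (B ∘L X₀ - C)) = 0) := by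
  classical
  have hJ2' : ∀ x, J (J x) = x := fun x => by
    have := ContinuousLinearMap.ext_iff.mp hJ2 x; simpa using this
  have hJ' : adjoint J = J := ContinuousLinearMap.isSelfAdjoint_iff'.mp hJ
  set M := J ∘L W with hMdef
  set D := B ∘L X₀ - C with hDdef
  set A := adjoint B ∘L (M ∘L D) with hAdef
  set b := stdOrthonormalBasis ℂ H with hb
  -- M is selfadjoint
  have hWJ : ∀ x, J (adjoint W (J x)) = W x := fun x => by
    have := ContinuousLinearMap.ext_iff.mp hW x; simpa using this
  have hMadj : adjoint M = M := by
    rw [hMdef, adjoint_comp, hJ']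
    ext x
    simp only [comp_apply]
    calc adjoint W (J x) = J (J (adjoint W (J x))) := (hJ2' _).symm
      _ = J (W x) := by rw [hWJ]
  have hMsa : ∀ u v : H, (inner ℂ (M u) v : ℂ) = inner ℂ u (M v) := fun u v => by
    conv_lhs => rw [← hMadj]
    exact adjoint_inner_left M v u
  -- the second iff
  have hcomp : (J ∘L adjoint B ∘L J) ∘L (W ∘L D) = J ∘L A := by
    ext x; simp [hAdef, hMdef]
  have hiff2 : (J ∘L adjoint B ∘L J) ∘L (W ∘L D) = 0 ↔ A = 0 := by
    rw [hcomp]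
    constructor
    · intro h0
      ext x
      have hx := ContinuousLinearMap.ext_iff.mp h0 x
      simp only [comp_apply, zero_apply] at hx
      have : J (J (A x)) = J 0 := by rw [hx]
      simpa [hJ2'] using this
    · intro h0
      rw [h0, comp_zero]
  refine ⟨?_, hiff2⟩
  rw [hiff2]
  -- key expansion
  have hsplit : ∀ X : H →L[ℂ] H, B ∘L X - C = D + B ∘L (X - X₀) := by
    intro X; ext x; simp [hDdef]
  have cross_eq : ∀ Y : H →L[ℂ] H,
      LinearMap.trace ℂ H ((adjoint (B ∘L Y) ∘L (M ∘L D) : H →L[ℂ] H) : H →ₗ[ℂ] H)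
        = LinearMap.trace ℂ H ((adjoint Y ∘L A : H →L[ℂ] H) : H →ₗ[ℂ] H) := by
    intro Y
    congr 2
    rw [hAdef, adjoint_comp, comp_assoc]
  have cross_conj : ∀ Y : H →L[ℂ] H,
      LinearMap.trace ℂ H ((adjoint D ∘L (M ∘L (B ∘L Y)) : H →L[ℂ] H) : H →ₗ[ℂ] H)
        = (starRingEnd ℂ)
            (LinearMap.trace ℂ H ((adjoint Y ∘L A : H →L[ℂ] H) : H →ₗ[ℂ] H)) := by
    intro Y
    rw [← cross_eq Y, phi_eq_sum, phi_eq_sum, map_sum]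
    refine Finset.sum_congr rfl fun i _ => ?_
    simp only [comp_apply]
    rw [← inner_conj_symm, hMsa]
  have expand : ∀ X : H →L[ℂ] H,
      LinearMap.trace ℂ H
          ((adjoint (B ∘L X - C) ∘L (M ∘L (B ∘L X - C)) : H →L[ℂ] H) : H →ₗ[ℂ] H)
        = LinearMap.trace ℂ H ((adjoint D ∘L (M ∘L D) : H →L[ℂ] H) : H →ₗ[ℂ] H)
          + LinearMap.trace ℂ H
              ((adjoint (B ∘L (X - X₀)) ∘L (M ∘L (B ∘L (X - X₀))) : H →L[ℂ] H) : H →ₗ[ℂ] H)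
          + (LinearMap.trace ℂ H ((adjoint (X - X₀) ∘L A : H →L[ℂ] H) : H →ₗ[ℂ] H)
            + (starRingEnd ℂ)
                (LinearMap.trace ℂ H ((adjoint (X - X₀) ∘L A : H →L[ℂ] H) : H →ₗ[ℂ] H))) := by
    intro X
    rw [hsplit X]
    rw [map_add, comp_add, add_comp, comp_add, comp_add]
    rw [← cross_conj (X - X₀), ← cross_eq (X - X₀)]
    simp only [ContinuousLinearMap.coe_add, map_add]
    ring
  -- nonnegativity of the quadratic term
  have hq : ∀ Y : H →L[ℂ] H,
      0 ≤ (LinearMap.trace ℂ H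
        ((adjoint (B ∘L Y) ∘L (M ∘L (B ∘L Y)) : H →L[ℂ] H) : H →ₗ[ℂ] H)).re := by
    intro Y
    rw [phi_eq_sum, Complex.re_sum]
    refine Finset.sum_nonneg fun i _ => ?_
    simp only [comp_apply]
    rw [← inner_conj_symm, Complex.conj_re]
    exact hBpos (Y ((stdOrthonormalBasis ℂ H) i))
  constructor
  · -- minimizer → A = 0
    intro h
    set s : ℝ := ∑ i, ‖A ((stdOrthonormalBasis ℂ H) i)‖ ^ 2 with hs
    have hsnn : 0 ≤ s := Finset.sum_nonneg fun i _ => by positivity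
    set zq : ℂ := LinearMap.trace ℂ H
        ((adjoint (B ∘L A) ∘L (M ∘L (B ∘L A)) : H →L[ℂ] H) : H →ₗ[ℂ] H) with hzq
    have hQnn : 0 ≤ zq.re := hq A
    have hAA : LinearMap.trace ℂ H ((adjoint A ∘L A : H →L[ℂ] H) : H →ₗ[ℂ] H) = (s : ℂ) := by
      rw [phi_eq_sum]
      push_cast [inner_self_eq_norm_sq_to_K, hs]
      norm_num
    -- specialize the minimality at X₀ - t • A
    have hkey : ∀ t : ℝ, 0 ≤ t ^ 2 * zq.re - 2 * t * s := by
      intro t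
      have hX := h (X₀ + (-(t : ℂ)) • A)
      rw [expand (X₀ + (-(t : ℂ)) • A)] at hX
      have hY : X₀ + (-(t : ℂ)) • A - X₀ = (-(t : ℂ)) • A := by abel
      rw [hY] at hX
      have h1 : B ∘L ((-(t : ℂ)) • A) = (-(t : ℂ)) • (B ∘L A) :=
        ContinuousLinearMap.comp_smul B _ A
      have h2 : LinearMap.trace ℂ H
          ((adjoint (B ∘L ((-(t : ℂ)) • A)) ∘L (M ∘L (B ∘L ((-(t : ℂ)) • A))) : H →L[ℂ] H) :
            H →ₗ[ℂ] H)
          = ((t ^ 2 : ℝ) : ℂ) * zq := by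
        rw [h1, hzq, phi_eq_sum, phi_eq_sum, Finset.mul_sum]
        refine Finset.sum_congr rfl fun i _ => ?_
        simp only [ContinuousLinearMap.smul_apply, comp_apply, map_smul,
          inner_smul_left, inner_smul_right, map_neg, Complex.conj_ofReal]
        push_cast
        ring
      have h3 : LinearMap.trace ℂ H
          ((adjoint ((-(t : ℂ)) • A) ∘L A : H →L[ℂ] H) : H →ₗ[ℂ] H)
          = ((-(t * s) : ℝ) : ℂ) := by
        have : LinearMap.trace ℂ H
            ((adjoint ((-(t : ℂ)) • A) ∘L A : H →L[ℂ] H) : H →ₗ[ℂ] H)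
            = (-(t : ℂ)) * LinearMap.trace ℂ H ((adjoint A ∘L A : H →L[ℂ] H) : H →ₗ[ℂ] H) := by
          rw [phi_eq_sum, phi_eq_sum, Finset.mul_sum]
          refine Finset.sum_congr rfl fun i _ => ?_
          simp only [ContinuousLinearMap.smul_apply, inner_smul_left, map_neg,
            Complex.conj_ofReal]
        rw [this, hAA]
        push_cast
        ring
      rw [h2, h3, Complex.conj_ofReal] at hX
      simp only [Complex.add_re, Complex.re_ofReal_mul, Complex.ofReal_re] at hX
      linarith
    -- conclude s = 0
    have hs0 : s = 0 := by
      by_contra hne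
      have hspos : 0 < s := lt_of_le_of_ne hsnn (Ne.symm hne)
      have ht := hkey (s / (zq.re + 1))
      have hu : (0:ℝ) < zq.re + 1 := by linarith
      have hpos : 0 < s ^ 2 / (zq.re + 1) ^ 2 := by positivity
      have e : (s / (zq.re + 1)) ^ 2 * zq.re - 2 * (s / (zq.re + 1)) * s
          = s ^ 2 / (zq.re + 1) ^ 2 * (zq.re - 2 * (zq.re + 1)) := by
        field_simp
      rw [e] at ht
      nlinarith [mul_pos hpos (show (0:ℝ) < zq.re + 2 by linarith)]
    have hAi : ∀ i, A ((stdOrthonormalBasis ℂ H) i) = 0 := by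
      intro i
      have h1 : ∀ j ∈ Finset.univ, (0:ℝ) ≤ ‖A ((stdOrthonormalBasis ℂ H) j)‖ ^ 2 :=
        fun j _ => by positivity
      have := (Finset.sum_eq_zero_iff_of_nonneg h1).mp hs0 i (Finset.mem_univ i)
      simpa using this
    apply ContinuousLinearMap.coe_injective
    apply Module.Basis.ext (stdOrthonormalBasis ℂ H).toBasis
    intro i
    simpa [OrthonormalBasis.coe_toBasis] using hAi i
  · -- A = 0 → minimizer
    intro hA0 X
    rw [expand X, hA0]
    simp only [comp_zero, ContinuousLinearMap.coe_zero, map_zero, add_zero]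
    simp only [Complex.add_re]
    have := hq (X - X₀)
    linarith
end
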